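/- arXiv:1003.2179 — 6 statements merged into one kernel-verified Lean document; each statement's English description precedes it below -/
import Mathlib

section
/- Let λ₁(u), λ₂(u) ∈ 1 + u⁻¹ℂ[[u⁻¹]]. Then λ₁(u) → λ₂(u) if and only if there exists γ(u) ∈ 1 + u⁻¹ℂ[[u⁻¹]] and complex numbers a₁,…,a_k, b₁,…,b_k with a_i − b_i ∈ ℤ_{≥0} for all i, such that γ(u)λ₁(u) = (1+a₁u⁻¹)⋯(1+a_ku⁻¹) and γ(u)λ₂(u) = (1+b₁u⁻¹)⋯(1+b_ku⁻¹). -/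
open PowerSeries Polynomial

noncomputable section

abbrev PS := PowerSeries ℂ

/-- `f ∈ 1 + u⁻¹ℂ[[u⁻¹]]`, with `X` playing the role of `u⁻¹`. -/
def One1 (f : PS) : Prop := PowerSeries.constantCoeff f = 1

/-- `f ∈ 1 + u⁻²ℂ[[u⁻²]]`: an even power series with constant term 1. -/
def EvenOne (f : PS) : Prop := One1 f ∧ ∀ n, Odd n → PowerSeries.coeff n f = 0

/-- `u^{-deg P}·P(u)` viewed as a power series in `X = u⁻¹`. -/
def lowerP (P : Polynomial ℂ) : PS := (P.reverse : PowerSeries ℂ)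

/-- `f → g`: there is a monic `P` with `f/g = P(u+1)/P(u)`. -/
def Arrow (f g : PS) : Prop :=
  ∃ P : Polynomial ℂ, P.Monic ∧ f * lowerP P = g * lowerP (P.comp (Polynomial.X + 1))

/-- `f ⇒ g`: there is a monic `P` of even degree with `P(u) = P(1−u)` and
`f/g = P(u+1)/P(u)`. -/
def DArrow (f g : PS) : Prop :=
  ∃ P : Polynomial ℂ, P.Monic ∧ Even P.natDegree ∧ P.comp (1 - Polynomial.X) = P ∧
    f * lowerP P = g * lowerP (P.comp (Polynomial.X + 1))

/-- `f(−u)`, i.e. `u⁻¹ ↦ −u⁻¹`. -/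
def negU (f : PS) : PS := PowerSeries.rescale (-1) f

/-- the factor `1 + a·u⁻¹`. -/
def linF (a : ℂ) : PS := 1 + PowerSeries.C a * PowerSeries.X

/-- `f` is a polynomial in `u⁻¹`. -/
def IsPolyPS (f : PS) : Prop := ∃ Q : Polynomial ℂ, (Q : PS) = f

/-- `z ∈ ℤ_{≥0}` (so `a ≥ b` iff `IsNonnegInt (a - b)`). -/
def IsNonnegInt (z : ℂ) : Prop := ∃ n : ℕ, z = n
lemma lowerP_mul (p q : Polynomial ℂ) : lowerP (p * q) = lowerP p * lowerP q := by
  simp [lowerP, Polynomial.reverse_mul_of_domain, Polynomial.coe_mul]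

lemma lowerP_one : lowerP 1 = 1 := by
  rw [lowerP]
  norm_cast
  simpa using Polynomial.reverse_C (1 : ℂ)

lemma lowerP_prod {ι : Type*} (s : Finset ι) (f : ι → Polynomial ℂ) :
    lowerP (∏ i ∈ s, f i) = ∏ i ∈ s, lowerP (f i) := by
  classical
  induction s using Finset.cons_induction with
  | empty => simp [lowerP_one]
  | cons a s ha ih => rw [Finset.prod_cons, lowerP_mul, ih, Finset.prod_cons]

lemma lowerP_X_add_C (c : ℂ) : lowerP (Polynomial.X + Polynomial.C c) = linF c := by
  have h : (Polynomial.X + Polynomial.C c).reverse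
      = 1 + Polynomial.C c * Polynomial.X := by
    rw [Polynomial.reverse, Polynomial.natDegree_X_add_C, Polynomial.reflect_add,
      ← pow_one (Polynomial.X : Polynomial ℂ), Polynomial.reflect_monomial,
      Polynomial.reflect_C]
    simp
  rw [lowerP, h]
  simp [linF, Polynomial.coe_add, Polynomial.coe_one, Polynomial.coe_mul,
    Polynomial.coe_C, Polynomial.coe_X]

lemma lowerP_X_sub_C (c : ℂ) : lowerP (Polynomial.X - Polynomial.C c) = linF (-c) := by
  rw [sub_eq_add_neg, ← Polynomial.C_neg, lowerP_X_add_C]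

lemma constantCoeff_lowerP (p : Polynomial ℂ) :
    PowerSeries.constantCoeff (lowerP p) = p.leadingCoeff := by
  rw [lowerP, ← PowerSeries.coeff_zero_eq_constantCoeff_apply, Polynomial.coeff_coe,
    Polynomial.coeff_zero_reverse]

lemma list_prod_getD {M : Type*} [CommMonoid M] (g : ℂ → M) (L : List ℂ) :
    (L.map g).prod = ∏ i ∈ Finset.range L.length, g (L.getD i 0) := by
  induction L with
  | nil => simp
  | cons x xs ih =>
      rw [List.map_cons, List.prod_cons, List.length_cons,
        Finset.prod_range_succ' (fun i => g ((x :: xs).getD i 0)) xs.length]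
      simp only [List.getD_cons_succ, List.getD_cons_zero]
      rw [← ih, mul_comm]

lemma linF_tele (c : ℂ) (n : ℕ) :
    linF (c + n) * ∏ j ∈ Finset.range n, linF (c + j) =
    linF c * ∏ j ∈ Finset.range n, linF (c + j + 1) := by
  rw [mul_comm, ← Finset.prod_range_succ (fun j : ℕ => linF (c + j)) n,
    Finset.prod_range_succ' (fun j : ℕ => linF (c + j)) n]
  rw [Nat.cast_zero, add_zero, mul_comm]
  congr 1
  refine Finset.prod_congr rfl fun j _ => ?_
  push_cast
  ring_nf


/-- λ₁ → λ₂ iff after multiplying by some γ ∈ 1 + u⁻¹ℂ[[u⁻¹]] both become products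
of linear factors whose roots are dominated entrywise. -/
theorem arrow_iff_factorization (l1 l2 : PS) (h1 : One1 l1) (h2 : One1 l2) :
    Arrow l1 l2 ↔
      ∃ (k : ℕ) (a b : ℕ → ℂ) (γ : PS), One1 γ ∧
        (∀ i < k, IsNonnegInt (a i - b i)) ∧
        γ * l1 = ∏ i ∈ Finset.range k, linF (a i) ∧
        γ * l2 = ∏ i ∈ Finset.range k, linF (b i) := by
  constructor
  · rintro ⟨P, hPm, hPeq⟩
    set L : List ℂ := P.roots.toList with hL
    set k := L.length
    set r : ℕ → ℂ := fun i => L.getD i 0 with hr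
    have hsplit : P = ∏ i ∈ Finset.range k, (Polynomial.X - Polynomial.C (r i)) := by
      conv_lhs => rw [(IsAlgClosed.splits P).eq_prod_roots_of_monic hPm]
      rw [← Multiset.coe_toList P.roots, Multiset.map_coe, Multiset.prod_coe, ← hL,
        list_prod_getD]
    have hcomp : P.comp (Polynomial.X + 1) =
        ∏ i ∈ Finset.range k, (Polynomial.X - Polynomial.C (r i - 1)) := by
      rw [hsplit, Polynomial.prod_comp]
      refine Finset.prod_congr rfl fun i _ => ?_
      simp only [Polynomial.sub_comp, Polynomial.X_comp, Polynomial.C_comp, map_sub,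
        Polynomial.C_1]
      ring
    have hcm : (P.comp (Polynomial.X + 1)).Monic := by
      have := hPm.comp_X_add_C (1 : ℂ)
      simpa using this
    have hl1 : PowerSeries.constantCoeff l1 ≠ 0 := by rw [h1]; exact one_ne_zero
    refine ⟨k, fun i => 1 - r i, fun i => -(r i), lowerP (P.comp (Polynomial.X + 1)) * l1⁻¹,
      ?_, ?_, ?_, ?_⟩
    · rw [One1, map_mul, constantCoeff_lowerP, hcm.leadingCoeff,
        PowerSeries.constantCoeff_inv, h1]
      simp
    · intro i _
      exact ⟨1, by push_cast; ring⟩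
    · have e : lowerP (P.comp (Polynomial.X + 1)) * l1⁻¹ * l1
          = lowerP (P.comp (Polynomial.X + 1)) * (l1 * l1⁻¹) := by ring
      rw [e, PowerSeries.mul_inv_cancel l1 hl1, mul_one, hcomp, lowerP_prod]
      refine Finset.prod_congr rfl fun i _ => ?_
      rw [lowerP_X_sub_C, neg_sub]
    · have e : lowerP (P.comp (Polynomial.X + 1)) * l1⁻¹ * l2
          = l1⁻¹ * (l2 * lowerP (P.comp (Polynomial.X + 1))) := by ring
      rw [e, ← hPeq]
      have e2 : l1⁻¹ * (l1 * lowerP P) = l1 * l1⁻¹ * lowerP P := by ring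
      rw [e2, PowerSeries.mul_inv_cancel l1 hl1, one_mul, hsplit, lowerP_prod]
      exact Finset.prod_congr rfl fun i _ => lowerP_X_sub_C (r i)
  · rintro ⟨k, a, b, γ, hγ, hab, hA, hB⟩
    classical
    set n : ℕ → ℕ := fun i => if h : i < k then (hab i h).choose else 0 with hn
    have ha : ∀ i ∈ Finset.range k, a i = b i + n i := by
      intro i hi
      rw [Finset.mem_range] at hi
      have := (hab i hi).choose_spec
      rw [hn]
      simp only [hi, dif_pos]
      linear_combination this
    set P : Polynomial ℂ := ∏ i ∈ Finset.range k, ∏ j ∈ Finset.range (n i),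
      (Polynomial.X + Polynomial.C (b i + j)) with hP
    have hPm : P.Monic :=
      monic_prod_of_monic _ _ fun i _ => monic_prod_of_monic _ _ fun j _ =>
        Polynomial.monic_X_add_C _
    have hlow : lowerP P = ∏ i ∈ Finset.range k, ∏ j ∈ Finset.range (n i),
        linF (b i + j) := by
      rw [hP, lowerP_prod]
      refine Finset.prod_congr rfl fun i _ => ?_
      rw [lowerP_prod]
      exact Finset.prod_congr rfl fun j _ => lowerP_X_add_C _
    have hlowc : lowerP (P.comp (Polynomial.X + 1)) =
        ∏ i ∈ Finset.range k, ∏ j ∈ Finset.range (n i), linF (b i + j + 1) := by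
      have hc : P.comp (Polynomial.X + 1) = ∏ i ∈ Finset.range k,
          ∏ j ∈ Finset.range (n i), (Polynomial.X + Polynomial.C (b i + j + 1)) := by
        rw [hP, Polynomial.prod_comp]
        refine Finset.prod_congr rfl fun i _ => ?_
        rw [Polynomial.prod_comp]
        refine Finset.prod_congr rfl fun j _ => ?_
        simp only [Polynomial.add_comp, Polynomial.X_comp, Polynomial.C_comp, map_add,
          Polynomial.C_1]
        ring
      rw [hc, lowerP_prod]
      refine Finset.prod_congr rfl fun i _ => ?_
      rw [lowerP_prod]
      exact Finset.prod_congr rfl fun j _ => lowerP_X_add_C _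
    have hγ0 : γ ≠ 0 := by
      intro h
      rw [One1, h, map_zero] at hγ
      exact zero_ne_one hγ
    refine ⟨P, hPm, mul_left_cancel₀ hγ0 ?_⟩
    rw [← mul_assoc, ← mul_assoc, hA, hB, hlow, hlowc, ← Finset.prod_mul_distrib,
      ← Finset.prod_mul_distrib]
    refine Finset.prod_congr rfl fun i hi => ?_
    rw [ha i hi]
    exact linF_tele (b i) (n i)
end
end

section
/- Let λ₁(u), λ₂(u) ∈ 1 + u⁻¹ℂ[[u⁻¹]] with λ₁(u) → λ₂(u). If γ(u) ∈ 1 + u⁻¹ℂ[[u⁻¹]] is such that both γ(u)λ₁(u) and γ(u)λ₂(u) are polynomials in u⁻¹, then one can write γ(u)λ₁(u) = (1+a₁u⁻¹)⋯(1+a_ku⁻¹) and γ(u)λ₂(u) = (1+b₁u⁻¹)⋯(1+b_ku⁻¹) with a_i − b_i ∈ ℤ_{≥0} for each i = 1,…,k. -/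
open PowerSeries Polynomial

noncomputable section

lemma key : ∀ n (A B M : Multiset ℂ), Multiset.card A + Multiset.card M = n →
    Multiset.card A = Multiset.card B →
    A + M = B + M.map (· - 1) →
    ∃ S : Multiset (ℂ × ℂ), (∀ p ∈ S, ∃ m : ℕ, p.2 - p.1 = (m : ℂ)) ∧
      S.map Prod.fst = A ∧ S.map Prod.snd = B := by
  intro n
  induction n using Nat.strong_induction_on with
  | _ n ih =>
    intro A B M hn hcard heq
    rcases Multiset.empty_or_exists_mem A with hA | ⟨α, hα⟩
    · have hB : B = 0 := by
        rw [hA] at hcard; simpa using hcard.symm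
      exact ⟨0, by simp, by simp [hA], by simp [hB]⟩
    · have hmem : α ∈ B + M.map (· - 1) := by rw [← heq]; exact Multiset.mem_add.mpr (Or.inl hα)
      rcases Multiset.mem_add.mp hmem with hB | hN
      · -- cancel α from both A and B
        have hcA : α ::ₘ (A.erase α + M) = α ::ₘ (B.erase α + M.map (· - 1)) := by
          rw [← Multiset.cons_add, ← Multiset.cons_add, Multiset.cons_erase hα,
            Multiset.cons_erase hB]
          exact heq
        have heq' := (Multiset.cons_inj_right α).mp hcA
        have hcard' : Multiset.card (A.erase α) = Multiset.card (B.erase α) := by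
          rw [Multiset.card_erase_of_mem hα, Multiset.card_erase_of_mem hB, hcard]
        have h1 : 0 < Multiset.card A := Multiset.card_pos_iff_exists_mem.mpr ⟨α, hα⟩
        have hlt : Multiset.card (A.erase α) + Multiset.card M < n := by
          rw [Multiset.card_erase_of_mem hα, Nat.pred_eq_sub_one]
          omega
        obtain ⟨S', hS1, hS2, hS3⟩ := ih _ hlt _ _ _ rfl hcard' heq'
        refine ⟨(α, α) ::ₘ S', ?_, ?_, ?_⟩
        · intro p hp
          rcases Multiset.mem_cons.mp hp with h | h
          · exact ⟨0, by simp [h]⟩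
          · exact hS1 p h
        · simp [hS2, Multiset.cons_erase hα]
        · simp [hS3, Multiset.cons_erase hB]
      · obtain ⟨c, hcM, hc⟩ := Multiset.mem_map.mp hN
        -- c - 1 = α, c ∈ M
        have heq' : (c ::ₘ A.erase α) + M.erase c
            = B + (M.erase c).map (· - 1) := by
          have h1 : (M.erase c).map (· - 1) = (M.map (· - 1)).erase α := by
            rw [Multiset.map_erase _ (fun x y h => by linear_combination h) c M, hc]
          rw [h1]
          have h2 : α ::ₘ ((c ::ₘ A.erase α) + M.erase c)
              = α ::ₘ (B + (M.map (· - 1)).erase α) := by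
            have lhs : α ::ₘ ((c ::ₘ A.erase α) + M.erase c) = A + M := by
              rw [Multiset.cons_add, Multiset.cons_swap, ← Multiset.cons_add,
                Multiset.cons_erase hα, ← Multiset.add_cons, Multiset.cons_erase hcM]
            have rhs : α ::ₘ (B + (M.map (· - 1)).erase α) = B + M.map (· - 1) := by
              rw [← Multiset.add_cons, Multiset.cons_erase hN]
            rw [lhs, rhs]; exact heq
          exact (Multiset.cons_inj_right α).mp h2
        have h1 : 0 < Multiset.card A := Multiset.card_pos_iff_exists_mem.mpr ⟨α, hα⟩
        have hcard' : Multiset.card (c ::ₘ A.erase α) = Multiset.card B := by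
          rw [Multiset.card_cons, Multiset.card_erase_of_mem hα, Nat.pred_eq_sub_one]
          omega
        have hlt : Multiset.card (c ::ₘ A.erase α) + Multiset.card (M.erase c) < n := by
          rw [Multiset.card_cons, Multiset.card_erase_of_mem hα, Multiset.card_erase_of_mem hcM,
            Nat.pred_eq_sub_one, Nat.pred_eq_sub_one]
          have h2 : 0 < Multiset.card M := Multiset.card_pos_iff_exists_mem.mpr ⟨c, hcM⟩
          omega
        obtain ⟨S', hS1, hS2, hS3⟩ := ih _ hlt _ _ _ rfl hcard' heq'
        have hcS : c ∈ S'.map Prod.fst := by rw [hS2]; exact Multiset.mem_cons_self c _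
        obtain ⟨p, hpS, hpc⟩ := Multiset.mem_map.mp hcS
        refine ⟨(α, p.2) ::ₘ S'.erase p, ?_, ?_, ?_⟩
        · intro q hq
          rcases Multiset.mem_cons.mp hq with h | h
          · obtain ⟨m, hm⟩ := hS1 p hpS
            refine ⟨m + 1, ?_⟩
            rw [h]
            push_cast
            rw [show ((α, p.2) : ℂ × ℂ).2 - ((α, p.2) : ℂ × ℂ).1 = p.2 - α from rfl, ← hm]
            linear_combination hc + hpc
          · exact hS1 q (Multiset.mem_of_mem_erase h)
        · have h3 : S'.map Prod.fst = c ::ₘ (S'.erase p).map Prod.fst := by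
            conv_lhs => rw [← Multiset.cons_erase hpS]
            rw [Multiset.map_cons, hpc]
          rw [hS2] at h3
          have h4 := (Multiset.cons_inj_right c).mp h3
          rw [Multiset.map_cons, ← h4, Multiset.cons_erase hα]
        · have h3 : S'.map Prod.snd = p.2 ::ₘ (S'.erase p).map Prod.snd := by
            conv_lhs => rw [← Multiset.cons_erase hpS]
            rw [Multiset.map_cons]
          rw [Multiset.map_cons, ← h3, hS3]



lemma reverse_X_sub_C (α : ℂ) : (Polynomial.X - Polynomial.C α).reverse = 1 - Polynomial.C α * Polynomial.X := by
  unfold Polynomial.reverse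
  rw [natDegree_X_sub_C, reflect_sub]
  have h1 : reflect 1 (Polynomial.X : ℂ[X]) = 1 := by
    rw [← pow_one (Polynomial.X : ℂ[X]), reflect_monomial]
    norm_num
  have h2 : reflect 1 (Polynomial.C α) = Polynomial.C α * Polynomial.X := by
    have : (Polynomial.C α : ℂ[X]) = Polynomial.C α * Polynomial.X ^ 0 := by ring
    rw [this, reflect_C_mul_X_pow]
    norm_num
  rw [h1, h2]

lemma reverse_multiset_prod (s : Multiset ℂ[X]) :
    s.prod.reverse = (s.map Polynomial.reverse).prod := by
  induction s using Multiset.induction_on with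
  | empty => simp [Polynomial.reverse]
  | cons p s ih =>
    rw [Multiset.prod_cons, Multiset.map_cons, Multiset.prod_cons,
      Polynomial.reverse_mul_of_domain, ih]

lemma eq_of_reverse_eq {p q : ℂ[X]} (hp : p.Monic) (hq : q.Monic)
    (hd : p.natDegree = q.natDegree) (hr : p.reverse = q.reverse) : p = q := by
  ext i
  rcases le_or_gt i p.natDegree with h | h
  · have e1 : p.reverse.coeff (p.natDegree - i) = p.coeff i := by
      rw [coeff_reverse, revAt_le (Nat.sub_le _ _), Nat.sub_sub_self h]
    have e2 : q.reverse.coeff (q.natDegree - i) = q.coeff i := by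
      rw [coeff_reverse, revAt_le (Nat.sub_le _ _), Nat.sub_sub_self (hd ▸ h)]
    rw [← e1, ← e2, hr, hd]
  · rw [coeff_eq_zero_of_natDegree_lt h, coeff_eq_zero_of_natDegree_lt (hd ▸ h)]

lemma prod_range_getD {M : Type*} [CommMonoid M] (L : List (ℂ × ℂ)) (f : ℂ × ℂ → M) :
    ∏ i ∈ Finset.range L.length, f (L.getD i (0, 0)) = (L.map f).prod := by
  induction L with
  | nil => simp
  | cons x L ih =>
    rw [List.length_cons, Finset.prod_range_succ', List.map_cons, List.prod_cons]
    simp only [List.getD_cons_succ, List.getD_cons_zero]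
    rw [ih, mul_comm]



lemma factor_of_const_one (Q : ℂ[X]) (h0 : Q.coeff 0 = 1) (k : ℕ) (hk : Q.natDegree ≤ k) :
    Q = ((Q.roots.map (·⁻¹) + Multiset.replicate (k - Q.natDegree) 0).map
      (fun α => 1 - Polynomial.C α * Polynomial.X)).prod := by
  have hQ0 : Q ≠ 0 := fun h => by simp [h] at h0
  have hcard : Multiset.card Q.roots = Q.natDegree :=
    splits_iff_card_roots.mp (IsAlgClosed.splits Q)
  have hroots0 : ∀ r ∈ Q.roots, r ≠ 0 := by
    intro r hr h
    have := isRoot_of_mem_roots hr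
    rw [h] at this
    rw [IsRoot.def, ← coeff_zero_eq_eval_zero, h0] at this
    exact one_ne_zero this
  have hfac := C_leadingCoeff_mul_prod_multiset_X_sub_C (p := Q) hcard
  -- rewrite each Polynomial.X - Polynomial.C r
  have hstep : (Q.roots.map (fun a => Polynomial.X - Polynomial.C a)).prod
      = Polynomial.C ((Q.roots.map (fun r => -r)).prod) * (Q.roots.map (fun r => 1 - Polynomial.C r⁻¹ * Polynomial.X)).prod := by
    rw [map_multiset_prod, Multiset.map_map, ← Multiset.prod_map_mul]
    apply congrArg
    apply Multiset.map_congr rfl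
    intro r hr
    have hr0 := hroots0 r hr
    simp only [Function.comp_apply]
    have h1 : (-r) * r⁻¹ = -1 := by field_simp
    rw [mul_sub, mul_one, ← mul_assoc, ← C_mul, h1]
    simp only [map_neg, map_one]
    ring
  have hQeq : Q = Polynomial.C (Q.leadingCoeff * (Q.roots.map (fun r => -r)).prod)
      * (Q.roots.map (fun r => 1 - Polynomial.C r⁻¹ * Polynomial.X)).prod := by
    rw [map_mul, mul_assoc, ← hstep, hfac]
  -- evaluate at 0
  have heval : (1 : ℂ) = Q.leadingCoeff * (Q.roots.map (fun r => -r)).prod := by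
    have := congrArg (fun p => Polynomial.eval 0 p) hQeq
    simp only [eval_mul, eval_C, coeff_zero_eq_eval_zero] at this ⊢
    rw [← coeff_zero_eq_eval_zero, h0] at this
    rw [eval_multiset_prod, Multiset.map_map] at this
    have hone : (Q.roots.map (eval 0 ∘ fun r => 1 - Polynomial.C r⁻¹ * Polynomial.X)).prod = 1 := by
      rw [Multiset.prod_eq_one]
      intro x hx
      simp only [Multiset.mem_map, Function.comp_apply] at hx
      obtain ⟨r, _, hr⟩ := hx
      simp at hr
      exact hr.symm
    rw [hone, mul_one] at this
    exact this
  rw [Multiset.map_add, Multiset.prod_add]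
  have hrepl : ((Multiset.replicate (k - Q.natDegree) (0:ℂ)).map (fun α => 1 - Polynomial.C α * Polynomial.X)).prod
      = 1 := by
    rw [Multiset.map_replicate]
    simp
  rw [hrepl, mul_one, Multiset.map_map]
  conv_lhs => rw [hQeq]
  rw [← heval, map_one, one_mul]
  rfl


lemma coe_linF_eq (c : ℂ) :
    ((1 - Polynomial.C c * Polynomial.X : Polynomial ℂ) : PS) = linF (-c) := by
  have h : (1 - Polynomial.C c * Polynomial.X : Polynomial ℂ)
      = 1 + Polynomial.C (-c) * Polynomial.X := by rw [map_neg]; ring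
  rw [h, Polynomial.coe_add, Polynomial.coe_mul, Polynomial.coe_one, Polynomial.coe_C,
    Polynomial.coe_X]
  rfl

lemma prod_eq_coe_prod (Q : Polynomial ℂ) (L : List (ℂ × ℂ)) (pr : (ℂ × ℂ) → ℂ)
    (A : Multiset ℂ)
    (hQ : Q = (A.map (fun α => 1 - Polynomial.C α * Polynomial.X)).prod)
    (hAL : A = Multiset.map pr ↑L) :
    (↑Q : PS) = ∏ i ∈ Finset.range L.length, linF (-(pr (L.getD i (0, 0)))) := by
  rw [prod_range_getD L (fun p => linF (-(pr p)))]
  rw [hQ, hAL, Multiset.map_coe, Multiset.map_coe, Multiset.prod_coe]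
  rw [← Polynomial.coeToPowerSeries.ringHom_apply, map_list_prod]
  rw [List.map_map, List.map_map]
  apply congrArg
  apply List.map_congr_left
  intro p _
  simp only [Function.comp_apply, Polynomial.coeToPowerSeries.ringHom_apply]
  exact coe_linF_eq (pr p)


/-- If λ₁ → λ₂ and γ·λ₁, γ·λ₂ are polynomials in u⁻¹ then their factorizations can be
matched so that corresponding roots dominate. -/
theorem arrow_poly_factorization (l1 l2 γ : PS) (h1 : One1 l1) (h2 : One1 l2)
    (hγ : One1 γ) (harr : Arrow l1 l2)
    (hp1 : IsPolyPS (γ * l1)) (hp2 : IsPolyPS (γ * l2)) :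
    ∃ (k : ℕ) (a b : ℕ → ℂ),
      (∀ i < k, IsNonnegInt (a i - b i)) ∧
      γ * l1 = ∏ i ∈ Finset.range k, linF (a i) ∧
      γ * l2 = ∏ i ∈ Finset.range k, linF (b i) := by
  classical
  obtain ⟨P, hPm, hPeq⟩ := harr
  obtain ⟨Q₁, hQ1⟩ := hp1
  obtain ⟨Q₂, hQ2⟩ := hp2
  set P' : Polynomial ℂ := P.comp (Polynomial.X + 1) with hP'def
  have hP'm : P'.Monic := by
    have := hPm.comp_X_add_C 1
    simpa [hP'def, map_one] using this
  -- constant coefficients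
  have hQ10 : Q₁.coeff 0 = 1 := by
    rw [← Polynomial.constantCoeff_coe, hQ1, map_mul, hγ, h1, mul_one]
  have hQ20 : Q₂.coeff 0 = 1 := by
    rw [← Polynomial.constantCoeff_coe, hQ2, map_mul, hγ, h2, mul_one]
  -- the polynomial identity
  have hpoly : Q₁ * P.reverse = Q₂ * P'.reverse := by
    have hps : (γ * l1) * (P.reverse : PS) = (γ * l2) * (P'.reverse : PS) := by
      rw [mul_assoc, mul_assoc]
      unfold lowerP at hPeq
      rw [hPeq]
    rw [← hQ1, ← hQ2] at hps
    exact Polynomial.coe_inj.mp (by push_cast; exact hps)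
  -- set up multisets of inverse roots, padded with zeros
  set d1 := Q₁.natDegree with hd1
  set d2 := Q₂.natDegree with hd2
  set k := max d1 d2 with hk
  set A : Multiset ℂ := Q₁.roots.map (·⁻¹) + Multiset.replicate (k - d1) 0 with hAdef
  set B : Multiset ℂ := Q₂.roots.map (·⁻¹) + Multiset.replicate (k - d2) 0 with hBdef
  have hA : Q₁ = (A.map (fun α => 1 - Polynomial.C α * Polynomial.X)).prod :=
    factor_of_const_one Q₁ hQ10 k (le_max_left _ _)
  have hB : Q₂ = (B.map (fun α => 1 - Polynomial.C α * Polynomial.X)).prod :=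
    factor_of_const_one Q₂ hQ20 k (le_max_right _ _)
  have hcardA : Multiset.card A = k := by
    have h := Polynomial.splits_iff_card_roots.mp (IsAlgClosed.splits Q₁)
    simp [hAdef, h]
    omega
  have hcardB : Multiset.card B = k := by
    have h := Polynomial.splits_iff_card_roots.mp (IsAlgClosed.splits Q₂)
    simp [hBdef, h]
    omega
  set R₁ : Polynomial ℂ := (A.map (fun α => Polynomial.X - Polynomial.C α)).prod with hR1def
  set R₂ : Polynomial ℂ := (B.map (fun α => Polynomial.X - Polynomial.C α)).prod with hR2def
  have hR1m : R₁.Monic := monic_multiset_prod_of_monic _ _ (fun α _ => monic_X_sub_C α)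
  have hR2m : R₂.Monic := monic_multiset_prod_of_monic _ _ (fun α _ => monic_X_sub_C α)
  have hrevR1 : R₁.reverse = Q₁ := by
    rw [hR1def, reverse_multiset_prod, Multiset.map_map]
    rw [hA]
    apply congrArg
    apply Multiset.map_congr rfl
    intro α _
    simp only [Function.comp_apply, reverse_X_sub_C, map_one]
  have hrevR2 : R₂.reverse = Q₂ := by
    rw [hR2def, reverse_multiset_prod, Multiset.map_map]
    rw [hB]
    apply congrArg
    apply Multiset.map_congr rfl
    intro α _
    simp only [Function.comp_apply, reverse_X_sub_C, map_one]
  -- P as a product over its roots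
  set m : Multiset ℂ := P.roots with hmdef
  have hm : P = (m.map (fun a => Polynomial.X - Polynomial.C a)).prod :=
    (IsAlgClosed.splits P).eq_prod_roots_of_monic hPm
  have hm' : P' = ((m.map (· - 1)).map (fun a => Polynomial.X - Polynomial.C a)).prod := by
    rw [hP'def]
    conv_lhs => rw [hm]
    rw [Polynomial.multiset_prod_comp, Multiset.map_map, Multiset.map_map]
    apply congrArg
    apply Multiset.map_congr rfl
    intro a _
    simp only [Function.comp_apply, Polynomial.sub_comp, Polynomial.X_comp, Polynomial.C_comp]
    rw [map_sub, Polynomial.C_1]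
    ring
  -- the u-world polynomial identity
  have hdP' : P'.natDegree = P.natDegree := by
    rw [hP'def, Polynomial.natDegree_comp]
    have : (Polynomial.X + 1 : Polynomial ℂ) = Polynomial.X + Polynomial.C 1 := by
      rw [Polynomial.C_1]
    rw [this, Polynomial.natDegree_X_add_C, mul_one]
  have hRP : R₁ * P = R₂ * P' := by
    apply eq_of_reverse_eq (hR1m.mul hPm) (hR2m.mul hP'm)
    · rw [hR1m.natDegree_mul hPm, hR2m.natDegree_mul hP'm, hdP']
      rw [hR1def, hR2def, natDegree_multiset_prod_X_sub_C_eq_card,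
        natDegree_multiset_prod_X_sub_C_eq_card, hcardA, hcardB]
    · rw [Polynomial.reverse_mul_of_domain, Polynomial.reverse_mul_of_domain,
        hrevR1, hrevR2]
      exact hpoly
  -- roots multiset identity
  have hrootsEq : A + m = B + m.map (· - 1) := by
    have h1 : (R₁ * P).roots = A + m := by
      rw [Polynomial.roots_mul (hR1m.mul hPm).ne_zero, hR1def,
        Polynomial.roots_multiset_prod_X_sub_C, ← hmdef]
    have h2 : (R₂ * P').roots = B + m.map (· - 1) := by
      rw [Polynomial.roots_mul (hR2m.mul hP'm).ne_zero, hR2def,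
        Polynomial.roots_multiset_prod_X_sub_C]
      congr 1
      rw [hm', Polynomial.roots_multiset_prod_X_sub_C]
    rw [← h1, ← h2, hRP]
  obtain ⟨S, hS1, hSfst, hSsnd⟩ := key (Multiset.card A + Multiset.card m) A B m rfl
    (by rw [hcardA, hcardB]) hrootsEq
  -- extract the list
  set L : List (ℂ × ℂ) := S.toList with hLdef
  refine ⟨L.length, fun i => -((L.getD i (0, 0)).1), fun i => -((L.getD i (0, 0)).2), ?_, ?_, ?_⟩
  · intro i hi
    have hmem : L.getD i (0, 0) ∈ S := by
      rw [List.getD_eq_getElem _ _ hi]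
      rw [← Multiset.mem_toList]
      exact List.getElem_mem _
    obtain ⟨n, hn⟩ := hS1 _ hmem
    exact ⟨n, by rw [← hn]; ring⟩
  · rw [← hQ1]
    exact prod_eq_coe_prod Q₁ L Prod.fst A hA (by rw [← hSfst, hLdef, Multiset.coe_toList])
  · rw [← hQ2]
    exact prod_eq_coe_prod Q₂ L Prod.snd B hB (by rw [← hSsnd, hLdef, Multiset.coe_toList])
end
end

section
/- Let λ₁(u),…,λ_m(u) ∈ 1 + u⁻¹ℂ[[u⁻¹]]. If λ₁(u) → λ₂(u) → ⋯ → λ_m(u), then there exists γ(u) ∈ 1 + u⁻¹ℂ[[u⁻¹]] such that γ(u)λ_i(u) is a polynomial in u⁻¹ for every i = 1,…,m. -/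
open PowerSeries Polynomial

noncomputable section

lemma one1_lowerP {P : Polynomial ℂ} (hP : P.Monic) : One1 (lowerP P) := by
  have : (PowerSeries.constantCoeff) (P.reverse : PS) = P.reverse.coeff 0 := by
    rw [← PowerSeries.coeff_zero_eq_constantCoeff_apply, Polynomial.coeff_coe]
  simp [One1, lowerP, this, Polynomial.coeff_zero_reverse, hP.leadingCoeff]

lemma isPolyPS_mul_poly {f : PS} (hf : IsPolyPS f) (Q : Polynomial ℂ) :
    IsPolyPS (f * (Q : PS)) := by
  obtain ⟨R, hR⟩ := hf
  exact ⟨R * Q, by push_cast [hR]; ring⟩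

/-- A chain λ₁ → λ₂ → ⋯ → λ_m admits a common γ making all γ·λ_i polynomials in u⁻¹. -/
theorem chain_common_gamma (m : ℕ) (l : ℕ → PS)
    (hone : ∀ i < m, One1 (l i))
    (hchain : ∀ i, i + 1 < m → Arrow (l i) (l (i + 1))) :
    ∃ γ : PS, One1 γ ∧ ∀ i < m, IsPolyPS (γ * l i) := by
  induction m generalizing l with
  | zero => exact ⟨1, by simp [One1], fun i hi => absurd hi (by omega)⟩
  | succ m ih =>
    rcases Nat.eq_zero_or_pos m with hm | hm
    · subst hm
      have h0 : One1 (l 0) := hone 0 (by omega)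
      refine ⟨(l 0)⁻¹, ?_, ?_⟩
      · simp [One1] at h0 ⊢; simp [h0]
      · intro i hi
        interval_cases i
        refine ⟨1, ?_⟩
        rw [Polynomial.coe_one, PowerSeries.inv_mul_cancel]
        rw [h0]; exact one_ne_zero
    · obtain ⟨γ, hγ1, hγp⟩ := ih (fun i => l (i + 1))
        (fun i hi => hone (i + 1) (by omega))
        (fun i hi => hchain (i + 1) (by omega))
      obtain ⟨P, hPm, hPe⟩ := hchain 0 (by omega)
      refine ⟨γ * lowerP P, ?_, ?_⟩
      · have := one1_lowerP hPm
        simp [One1] at hγ1 this ⊢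
        simp [hγ1, this]
      · intro i hi
        match i with
        | 0 =>
          have : γ * lowerP P * l 0 = (γ * l 1) * lowerP (P.comp (Polynomial.X + 1)) := by
            calc γ * lowerP P * l 0 = γ * (l 0 * lowerP P) := by ring
            _ = γ * (l 1 * lowerP (P.comp (Polynomial.X + 1))) := by rw [hPe]
            _ = _ := by ring
          rw [this]
          exact isPolyPS_mul_poly (hγp 0 hm) _
        | (j + 1) =>
          have : γ * lowerP P * l (j + 1) = (γ * l (j + 1)) * lowerP P := by ring
          rw [this]
          exact isPolyPS_mul_poly (hγp j (by omega)) _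
end
end

section
/- Suppose μ(u) ∈ 1 + u⁻¹ℂ[u⁻¹] satisfies μ(−u) ⇒ μ(u), and there exists γ(u) ∈ 1 + u⁻²ℂ[[u⁻²]] with γ(u)μ(u) = (1−a₁u⁻¹)⋯(1−a_{2k}u⁻¹) where a_{2i−1} + a_{2i} ∈ ℤ_{≥0} for i = 1,…,k. Then there exists γ′(u) ∈ 1 + u⁻²ℂ[[u⁻²]] and, after re-indexing (a₁,…,a_{2k}), an integer m ≤ k with γ′(u)μ(u) = (1−a₁u⁻¹)⋯(1−a_{2m}u⁻¹), such that a_i ≠ −a_j for all i ≠ j in {1,…,2m}, and a_{2i−1} + a_{2i} ∈ ℤ_{≥0} for i = 1,…,m. -/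
open PowerSeries Polynomial

noncomputable section

-- basic facts
lemma constantCoeff_linF (a : ℂ) : PowerSeries.constantCoeff (linF a) = 1 := by
  simp [linF]

lemma coeff_linF (a : ℂ) (n : ℕ) :
    PowerSeries.coeff n (linF a) = if n = 0 then 1 else if n = 1 then a else 0 := by
  rcases n with _ | _ | n <;> simp [linF, PowerSeries.coeff_one]

lemma rescale_linF (r a : ℂ) : rescale r (linF a) = linF (r * a) := by
  ext n
  rw [coeff_rescale, coeff_linF, coeff_linF]
  rcases n with _ | _ | n <;> simp [mul_comm]

lemma evenOne_iff (f : PS) :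
    EvenOne f ↔ (PowerSeries.constantCoeff f = 1 ∧ rescale (-1) f = f) := by
  constructor
  · rintro ⟨h1, h2⟩
    refine ⟨h1, ?_⟩
    ext n
    rcases Nat.even_or_odd n with he | ho
    · simp [coeff_rescale, he.neg_one_pow]
    · simp [coeff_rescale, h2 n ho]
  · rintro ⟨h1, h2⟩
    refine ⟨h1, fun n hn => ?_⟩
    have := congrArg (PowerSeries.coeff n) h2
    rw [coeff_rescale, hn.neg_one_pow, neg_one_mul] at this
    exact neg_eq_self.mp this

lemma evenOne_mul {f g : PS} (hf : EvenOne f) (hg : EvenOne g) : EvenOne (f * g) := by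
  rw [evenOne_iff] at *
  simp [map_mul, hf.1, hg.1, hf.2, hg.2]

lemma evenOne_inv {f : PS} (hf : EvenOne f) : EvenOne f⁻¹ := by
  rw [evenOne_iff] at *
  refine ⟨by simp [PowerSeries.constantCoeff_inv, hf.1], ?_⟩
  have h0 : PowerSeries.constantCoeff f ≠ 0 := by rw [hf.1]; exact one_ne_zero
  have hmul : f * f⁻¹ = 1 := PowerSeries.mul_inv_cancel _ h0
  have h2 : f * rescale (-1) f⁻¹ = 1 := by
    have := congrArg (rescale (-1)) hmul
    rwa [map_mul, map_one, hf.2] at this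
  calc rescale (-1) f⁻¹ = rescale (-1) f⁻¹ * (f * f⁻¹) := by rw [hmul, mul_one]
    _ = (f * rescale (-1) f⁻¹) * f⁻¹ := by ring
    _ = f⁻¹ := by rw [h2, one_mul]

lemma evenOne_opp (c : ℂ) : EvenOne (linF c * linF (-c)) := by
  rw [evenOne_iff]
  constructor
  · simp [map_mul, constantCoeff_linF]
  · rw [map_mul, rescale_linF, rescale_linF, neg_one_mul, neg_one_mul, neg_neg, mul_comm]

-- ===== list machinery =====
abbrev Pr := (ℕ × ℂ) × (ℕ × ℂ)

def ents (L : List Pr) : List (ℕ × ℂ) := L.flatMap (fun p => [p.1, p.2])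

def gF (e : ℕ × ℂ) : PS := linF (-(e.2))

def prodL (L : List Pr) : PS := ((ents L).map gF).prod

lemma ents_nil : ents [] = [] := rfl
lemma ents_cons (p : Pr) (T : List Pr) : ents (p :: T) = p.1 :: p.2 :: ents T := rfl

lemma ents_perm {T T' : List Pr} (h : T.Perm T') : (ents T).Perm (ents T') :=
  h.flatMap_right _

lemma prodL_cons (p : Pr) (T : List Pr) :
    prodL (p :: T) = gF p.1 * gF p.2 * prodL T := by
  simp [prodL, ents_cons, mul_assoc]

lemma prodL_perm {T T' : List Pr} (h : T.Perm T') : prodL T = prodL T' :=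
  ((ents_perm h).map gF).prod_eq

lemma mem_ents {e : ℕ × ℂ} {L : List Pr} :
    e ∈ ents L ↔ ∃ p ∈ L, e = p.1 ∨ e = p.2 := by
  simp [ents, List.mem_flatMap, or_comm, eq_comm]

lemma ents_length (L : List Pr) : (ents L).length = 2 * L.length := by
  induction L with
  | nil => rfl
  | cons p T ih => simp [ents_cons, ih]; ring

lemma linF_unit (a : ℂ) : linF a * (linF a)⁻¹ = 1 :=
  PowerSeries.mul_inv_cancel _ (by rw [constantCoeff_linF]; exact one_ne_zero)

def sl : Pr → Bool → ℕ × ℂ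
  | p, true => p.1
  | p, false => p.2

lemma isNonnegInt_add {x y : ℂ} (hx : IsNonnegInt x) (hy : IsNonnegInt y) :
    IsNonnegInt (x + y) := by
  obtain ⟨n, rfl⟩ := hx; obtain ⟨m, rfl⟩ := hy
  exact ⟨n + m, by push_cast; ring⟩

lemma constantCoeff_gF (e : ℕ × ℂ) : PowerSeries.constantCoeff (gF e) = 1 :=
  constantCoeff_linF _

lemma EvenOne.unit {f : PS} (h : EvenOne f) : f * f⁻¹ = 1 :=
  PowerSeries.mul_inv_cancel _
    (by rw [show PowerSeries.constantCoeff f = 1 from h.1]; exact one_ne_zero)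

lemma key_s5 : ∀ (n : ℕ) (L : List Pr), L.length = n → ∀ (μ γ : PS), EvenOne γ →
    γ * μ = prodL L →
    (∀ p ∈ L, IsNonnegInt (p.1.2 + p.2.2)) →
    ∃ (γ' : PS) (M : List Pr), EvenOne γ' ∧ M.length ≤ L.length ∧
      (ents M).Subperm (ents L) ∧
      γ' * μ = prodL M ∧
      (∀ p ∈ M, IsNonnegInt (p.1.2 + p.2.2)) ∧
      List.Pairwise (fun e e' => e.2 ≠ -e'.2) (ents M) := by
  intro n
  induction n with
  | zero =>
    intro L hL μ γ hγ hprod hpair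
    have hLnil : L = [] := List.length_eq_zero_iff.mp hL
    subst hLnil
    exact ⟨γ, [], hγ, le_rfl, List.Subperm.refl _, hprod, by simp, by simp [ents_nil]⟩
  | succ n ih =>
    intro L hL μ γ hγ hprod hpair
    match L, hL with
    | p :: T, hL =>
    have hT : T.length = n := by simpa using hL
    by_cases hA : p.1.2 = -(p.2.2)
    · -- the pair p is itself opposite: drop it
      set E := gF p.1 * gF p.2 with hE
      have hEeven : EvenOne E := by
        have h2 : E = linF (p.2.2) * linF (-(p.2.2)) := by
          rw [hE]; unfold gF; rw [hA, neg_neg]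
        rw [h2]; exact evenOne_opp _
      have h1 : (γ * E⁻¹) * μ = prodL T := by
        have h2 : γ * μ = E * prodL T := by rw [hprod, prodL_cons, ← hE]
        calc (γ * E⁻¹) * μ = (γ * μ) * E⁻¹ := by ring
          _ = (E * E⁻¹) * prodL T := by rw [h2]; ring
          _ = prodL T := by rw [hEeven.unit, one_mul]
      obtain ⟨γ', M, h1e, h2l, h3s, h4p, h5pr, h6pw⟩ :=
        ih T hT μ (γ * E⁻¹) (evenOne_mul hγ (evenOne_inv hEeven)) h1
          (fun q hq => hpair q (List.mem_cons_of_mem _ hq))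
      refine ⟨γ', M, h1e, h2l.trans (by simp), ?_, h4p, h5pr, h6pw⟩
      rw [ents_cons]
      exact h3s.trans
        (((List.sublist_cons_self p.2 (ents T)).trans
          (List.sublist_cons_self p.1 _)).subperm)
    · by_cases hB : ∃ q ∈ T, ∃ s t : Bool, (sl p s).2 = -((sl q t).2)
      · obtain ⟨q, hq, s, t, hop⟩ := hB
        classical
        obtain ⟨T', hperm⟩ : ∃ T', T.Perm (q :: T') :=
          ⟨_, List.perm_cons_erase hq⟩
        set np : Pr := (sl p (!s), sl q (!t)) with hnp
        have hNlen : (np :: T').length = n := by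
          have := hperm.length_eq
          simp only [List.length_cons] at this ⊢
          omega
        set E := gF (sl p s) * gF (sl q t) with hE
        have hEeven : EvenOne E := by
          have h2 : E = linF ((sl q t).2) * linF (-((sl q t).2)) := by
            rw [hE]; unfold gF; rw [hop, neg_neg]
          rw [h2]; exact evenOne_opp _
        have hfour : prodL (p :: T) = E * prodL (np :: T') := by
          rw [prodL_cons, prodL_perm hperm, prodL_cons, prodL_cons, hE, hnp]
          cases s <;> cases t <;> simp only [sl, Bool.not_true, Bool.not_false] <;> ring
        have h1 : (γ * E⁻¹) * μ = prodL (np :: T') := by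
          calc (γ * E⁻¹) * μ = (γ * μ) * E⁻¹ := by ring
            _ = (E * E⁻¹) * prodL (np :: T') := by rw [hprod, hfour]; ring
            _ = prodL (np :: T') := by rw [hEeven.unit, one_mul]
        have hpairN : ∀ r ∈ np :: T', IsNonnegInt (r.1.2 + r.2.2) := by
          intro r hr
          rcases List.mem_cons.mp hr with rfl | hr'
          · have hsum : np.1.2 + np.2.2 = (p.1.2 + p.2.2) + (q.1.2 + q.2.2) := by
              rw [hnp]
              cases s <;> cases t <;>
                simp only [sl, Bool.not_true, Bool.not_false] at hop ⊢ <;>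
                linear_combination -hop
            rw [hsum]
            exact isNonnegInt_add (hpair p (List.mem_cons_self)) (hpair q (List.mem_cons_of_mem _ hq))
          · exact hpair r (List.mem_cons_of_mem _ (hperm.symm.subset (List.mem_cons_of_mem _ hr')))
        obtain ⟨γ', M, h1e, h2l, h3s, h4p, h5pr, h6pw⟩ :=
          ih (np :: T') hNlen μ (γ * E⁻¹) (evenOne_mul hγ (evenOne_inv hEeven)) h1 hpairN
        have hpe : (ents (p :: T)).Perm (p.1 :: p.2 :: q.1 :: q.2 :: ents T') := by
          rw [ents_cons]
          exact (((ents_perm hperm).cons p.2).cons p.1)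
        have hsub : (ents (np :: T')).Sublist (p.1 :: p.2 :: q.1 :: q.2 :: ents T') := by
          rw [ents_cons, hnp]
          cases s <;> cases t <;>
            simp only [sl, Bool.not_true, Bool.not_false]
          · exact ((((List.Sublist.refl (ents T')).cons q.2).cons₂ q.1).cons p.2).cons₂ p.1
          · exact ((((List.Sublist.refl (ents T')).cons₂ q.2).cons q.1).cons p.2).cons₂ p.1
          · exact ((((List.Sublist.refl (ents T')).cons q.2).cons₂ q.1).cons₂ p.2).cons p.1
          · exact ((((List.Sublist.refl (ents T')).cons₂ q.2).cons q.1).cons₂ p.2).cons p.1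
        refine ⟨γ', M, h1e, ?_, ?_, h4p, h5pr, h6pw⟩
        · have : M.length ≤ n := h2l.trans_eq hNlen
          simp only [List.length_cons, hT]
          omega
        · exact h3s.trans (hsub.subperm.trans hpe.symm.subperm)
      · -- head pair is compatible with everything; keep it
        push_neg at hB
        set E := gF p.1 * gF p.2 with hE
        have hEunit : E * E⁻¹ = 1 := by
          refine PowerSeries.mul_inv_cancel _ ?_
          rw [hE, map_mul, constantCoeff_gF, constantCoeff_gF, one_mul]
          exact one_ne_zero
        have h1 : γ * (μ * E⁻¹) = prodL T := by
          calc γ * (μ * E⁻¹) = (γ * μ) * E⁻¹ := by ring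
            _ = (E * E⁻¹) * prodL T := by rw [hprod, prodL_cons, ← hE]; ring
            _ = prodL T := by rw [hEunit, one_mul]
        obtain ⟨γ', M', h1e, h2l, h3s, h4p, h5pr, h6pw⟩ :=
          ih T hT (μ * E⁻¹) γ hγ h1
            (fun r hr => hpair r (List.mem_cons_of_mem _ hr))
        have hcompat : ∀ e ∈ ents M', ∀ s : Bool, (sl p s).2 ≠ -(e.2) := by
          intro e he s
          have heT : e ∈ ents T := h3s.subset he
          obtain ⟨r, hrT, hre⟩ := mem_ents.mp heT
          rcases hre with rfl | rfl
          · exact hB r hrT s true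
          · exact hB r hrT s false
        refine ⟨γ', p :: M', h1e, by simpa using Nat.succ_le_succ h2l, ?_, ?_, ?_, ?_⟩
        · rw [ents_cons, ents_cons]
          exact (List.subperm_cons _).mpr ((List.subperm_cons _).mpr h3s)
        · have hmuE : μ * E⁻¹ * E = μ := by
            rw [mul_assoc, mul_comm E⁻¹ E, hEunit, mul_one]
          calc γ' * μ = (γ' * (μ * E⁻¹)) * E := by rw [mul_assoc, hmuE]
            _ = prodL M' * E := by rw [h4p]
            _ = prodL (p :: M') := by rw [prodL_cons, ← hE]; ring
        · intro r hr
          rcases List.mem_cons.mp hr with rfl | hr'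
          · exact hpair r (List.mem_cons_self)
          · exact h5pr r hr'
        · rw [ents_cons]
          refine List.Pairwise.cons ?_ (List.Pairwise.cons ?_ h6pw)
          · intro e he
            rcases List.mem_cons.mp he with rfl | he'
            · exact hA
            · exact hcompat e he' true
          · exact fun e he => hcompat e he false

-- ===== conversion helpers =====
lemma prod_map_getD {α : Type*} (l : List α) (g : α → PS) (d : α) :
    (l.map g).prod = ∏ i ∈ Finset.range l.length, g (l.getD i d) := by
  induction l with
  | nil => simp
  | cons x t ih =>
    simp [Finset.prod_range_succ', List.getD_cons_succ, List.getD_cons_zero, ih, mul_comm]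

lemma prod_range_map (n : ℕ) (h : ℕ → PS) :
    ((List.range n).map h).prod = ∏ i ∈ Finset.range n, h i := by
  rw [prod_map_getD (List.range n) h 0, List.length_range]
  refine Finset.prod_congr rfl fun i hi => ?_
  rw [List.getD_eq_getElem _ _ (by simpa using Finset.mem_range.mp hi), List.getElem_range]

lemma ents_getD (L : List Pr) (dp : Pr) (d : ℕ × ℂ) :
    ∀ i, i < L.length →
      (ents L).getD (2*i) d = (L.getD i dp).1 ∧ (ents L).getD (2*i+1) d = (L.getD i dp).2 := by
  induction L with
  | nil => intro i hi; simp at hi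
  | cons p T ih =>
    intro i hi
    cases i with
    | zero => simp [ents_cons]
    | succ i =>
      have h2 : 2*(i+1) = (2*i+1)+1 := by ring
      rw [h2, ents_cons]
      simp only [List.getD_cons_succ]
      exact ih i (by simpa using Nat.lt_of_succ_lt_succ hi)

def L0 (k : ℕ) (a : ℕ → ℂ) : List Pr :=
  (List.range k).map (fun i => (((2*i, a (2*i)), (2*i+1, a (2*i+1))) : Pr))

lemma ents_L0 (k : ℕ) (a : ℕ → ℂ) :
    ents (L0 k a) = (List.range (2*k)).map (fun i => (i, a i)) := by
  induction k with
  | zero => rfl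
  | succ k ih =>
    have h2 : 2*(k+1) = (2*k+1)+1 := by ring
    simp only [L0, ents] at ih ⊢
    rw [h2, List.range_succ, List.range_succ, List.range_succ, List.map_append,
      List.map_append, List.map_append, List.flatMap_append, ih]
    simp

theorem paired_factorization_reduced'_unused (μ γ : PS) (k : ℕ) (a : ℕ → ℂ)
    (hγ : EvenOne γ)
    (he : γ * μ = ∏ i ∈ Finset.range (2*k), linF (-(a i)))
    (hpair : ∀ i < k, IsNonnegInt (a (2*i) + a (2*i+1))) :
    ∃ (γ' : PS) (m : ℕ) (b : ℕ → ℂ) (f : ℕ → ℕ), m ≤ k ∧ EvenOne γ' ∧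
      Set.InjOn f ↑(Finset.range (2*m)) ∧
      (∀ i < 2*m, f i < 2*k ∧ b i = a (f i)) ∧
      γ' * μ = ∏ i ∈ Finset.range (2*m), linF (-(b i)) ∧
      (∀ i < 2*m, ∀ j < 2*m, i ≠ j → b i ≠ -(b j)) ∧
      (∀ i < m, IsNonnegInt (b (2*i) + b (2*i+1))) := by
  -- the initial product as a list product
  have hprodL0 : prodL (L0 k a) = ∏ i ∈ Finset.range (2*k), linF (-(a i)) := by
    rw [prodL, ents_L0, List.map_map, ← prod_range_map]
    rfl
  have hpairL0 : ∀ p ∈ L0 k a, IsNonnegInt (p.1.2 + p.2.2) := by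
    intro p hp
    simp only [L0, List.mem_map, List.mem_range] at hp
    obtain ⟨i, hik, rfl⟩ := hp
    exact hpair i hik
  obtain ⟨γ', M, h1e, h2l, h3s, h4p, h5pr, h6pw⟩ :=
    key_s5 (L0 k a).length (L0 k a) rfl μ γ hγ (by rw [he, ← hprodL0]) hpairL0
  set de : ℕ × ℂ := (0, (0:ℂ)) with hde
  set dp : Pr := ((0, (0:ℂ)), (0, (0:ℂ))) with hdp
  set m := M.length with hm
  set b : ℕ → ℂ := fun i => ((ents M).getD i de).2 with hb
  set f : ℕ → ℕ := fun i => ((ents M).getD i de).1 with hf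
  have hlen2 : (ents M).length = 2*m := ents_length M
  -- membership in ents L0
  have hmemL0 : ∀ x ∈ ents (L0 k a), x.1 < 2*k ∧ x.2 = a x.1 := by
    intro x hx
    rw [ents_L0] at hx
    simp only [List.mem_map, List.mem_range] at hx
    obtain ⟨i, hik, rfl⟩ := hx
    exact ⟨hik, rfl⟩
  -- Nodup of first components
  have hnodup : ((ents M).map Prod.fst).Nodup := by
    obtain ⟨l, hl1, hl2⟩ := h3s
    have hA : ((ents (L0 k a)).map Prod.fst).Nodup := by
      rw [ents_L0, List.map_map]
      have : (Prod.fst ∘ fun i => ((i, a i) : ℕ × ℂ)) = id := rfl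
      rw [this, List.map_id]
      exact List.nodup_range
    exact ((hl1.map Prod.fst).nodup_iff).mp (hA.sublist (hl2.map Prod.fst))
  refine ⟨γ', m, b, f, ?_, h1e, ?_, ?_, ?_, ?_, ?_⟩
  · -- m ≤ k
    simpa [L0] using h2l
  · -- InjOn
    intro i hi j hj hij
    simp only [Finset.coe_range, Set.mem_Iio] at hi hj
    have hi' : i < (ents M).length := by omega
    have hj' : j < (ents M).length := by omega
    have hi'' : i < ((ents M).map Prod.fst).length := by simpa using hi'
    have hj'' : j < ((ents M).map Prod.fst).length := by simpa using hj'
    have key2 : ((ents M).map Prod.fst)[i]'hi'' = ((ents M).map Prod.fst)[j]'hj'' := by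
      rw [List.getElem_map, List.getElem_map]
      have e1 : f i = ((ents M)[i]'hi').1 := by
        show ((ents M).getD i de).1 = _
        rw [List.getD_eq_getElem _ de hi']
      have e2 : f j = ((ents M)[j]'hj').1 := by
        show ((ents M).getD j de).1 = _
        rw [List.getD_eq_getElem _ de hj']
      rw [← e1, ← e2]; exact hij
    exact (hnodup.getElem_inj_iff).mp key2
  · -- f i < 2k and b i = a (f i)
    intro i hi
    have hi' : i < (ents M).length := by omega
    have hmem : (ents M).getD i de ∈ ents M := by
      rw [List.getD_eq_getElem _ _ hi']; exact List.getElem_mem hi'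
    have := hmemL0 _ (h3s.subset hmem)
    exact ⟨this.1, this.2⟩
  · -- the product
    rw [h4p, prodL, prod_map_getD (ents M) gF de, hlen2]
    rfl
  · -- no opposites
    have hgen : ∀ i j, i < 2*m → j < 2*m → i < j → b i ≠ -(b j) := by
      intro i j hi hj hlt
      have hi' : i < (ents M).length := by omega
      have hj' : j < (ents M).length := by omega
      have hpw := List.pairwise_iff_getElem.mp h6pw i j hi' hj' hlt
      have e1 : b i = ((ents M)[i]'hi').2 := by
        show ((ents M).getD i de).2 = _
        rw [List.getD_eq_getElem _ de hi']
      have e2 : b j = ((ents M)[j]'hj').2 := by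
        show ((ents M).getD j de).2 = _
        rw [List.getD_eq_getElem _ de hj']
      rw [e1, e2]; exact hpw
    intro i hi j hj hij
    rcases Nat.lt_or_ge i j with h | h
    · exact hgen i j hi hj h
    · have hlt : j < i := lt_of_le_of_ne h (Ne.symm hij)
      intro heq
      exact hgen j i hj hi hlt (by rw [heq, neg_neg])
  · -- pairing
    intro i hi
    have h1 := ents_getD M dp de i hi
    have hmem : M.getD i dp ∈ M := by
      rw [List.getD_eq_getElem _ _ hi]; exact List.getElem_mem hi
    have hni := h5pr _ hmem
    have e1 : b (2*i) = (M.getD i dp).1.2 := by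
      show ((ents M).getD (2*i) de).2 = _
      rw [h1.1]
    have e2 : b (2*i+1) = (M.getD i dp).2.2 := by
      show ((ents M).getD (2*i+1) de).2 = _
      rw [h1.2]
    rw [e1, e2]; exact hni

/-- A paired factorization of μ can be reduced (by dropping opposite pairs) to one with
no two roots opposite, keeping the pairing property. -/
theorem paired_factorization_reduced (μ γ : PS) (k : ℕ) (a : ℕ → ℂ)
    (hμ1 : One1 μ) (hμp : IsPolyPS μ)
    (hd : DArrow (negU μ) μ) (hγ : EvenOne γ)
    (he : γ * μ = ∏ i ∈ Finset.range (2*k), linF (-(a i)))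
    (hpair : ∀ i < k, IsNonnegInt (a (2*i) + a (2*i+1))) :
    ∃ (γ' : PS) (m : ℕ) (b : ℕ → ℂ) (f : ℕ → ℕ), m ≤ k ∧ EvenOne γ' ∧
      Set.InjOn f ↑(Finset.range (2*m)) ∧
      (∀ i < 2*m, f i < 2*k ∧ b i = a (f i)) ∧
      γ' * μ = ∏ i ∈ Finset.range (2*m), linF (-(b i)) ∧
      (∀ i < 2*m, ∀ j < 2*m, i ≠ j → b i ≠ -(b j)) ∧
      (∀ i < m, IsNonnegInt (b (2*i) + b (2*i+1))) := by
  exact paired_factorization_reduced'_unused μ γ k a hγ he hpair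
end
end

section
/- Let μ(u) ∈ 1 + u⁻¹ℂ[[u⁻¹]] with μ(−u) ⇒ μ(u). If γ(u) ∈ 1 + u⁻²ℂ[[u⁻²]] is such that γ(u)μ(u) is a polynomial in u⁻¹, then one can write γ(u)μ(u) = (1−a₁u⁻¹)(1−a₂u⁻¹)⋯(1−a_{2k}u⁻¹) with a_{2i−1} + a_{2i} ∈ ℤ_{≥0} for each i = 1,…,k. -/
open PowerSeries Polynomial

noncomputable section

namespace DAEG

open Multiset

/-! ### Combinatorial part -/

def Paired (S : Multiset ℂ) : Prop :=
  ∃ (k : ℕ) (a : ℕ → ℂ) (j : ℕ),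
    (∀ i < k, IsNonnegInt (a (2*i) + a (2*i+1))) ∧
    S + Multiset.replicate j 0 = (Finset.range (2*k)).val.map a

lemma Paired.zero : Paired (0 : Multiset ℂ) := by
  refine ⟨0, fun _ => 0, 0, fun i hi => absurd hi (Nat.not_lt_zero i), ?_⟩
  simp

lemma Paired.replicate (n : ℕ) : Paired (Multiset.replicate n (0:ℂ)) := by
  refine ⟨(n+1)/2, fun _ => 0, 2*((n+1)/2) - n, fun i hi => ⟨0, by simp⟩, ?_⟩
  rw [Finset.range_val, Multiset.map_const', Multiset.card_range,
    ← Multiset.replicate_add]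
  congr 1
  omega

lemma Paired.cons_pair (x y : ℂ) (h : IsNonnegInt (x + y)) {S : Multiset ℂ}
    (hS : Paired S) : Paired (x ::ₘ y ::ₘ S) := by
  obtain ⟨k, a, j, hpair, heq⟩ := hS
  refine ⟨k+1, fun i => if i = 2*k then x else if i = 2*k+1 then y else a i, j, ?_, ?_⟩
  · intro i hi
    rcases Nat.lt_succ_iff_lt_or_eq.mp hi with hik | rfl
    · have h1 : 2*i ≠ 2*k := by omega
      have h2 : 2*i ≠ 2*k+1 := by omega
      have h3 : 2*i+1 ≠ 2*k := by omega
      have h4 : 2*i+1 ≠ 2*k+1 := by omega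
      simpa [h1, h2, h3, h4] using hpair i hik
    · simp [h]
  · have hr : (Finset.range (2*(k+1))).val = (2*k+1) ::ₘ (2*k) ::ₘ (Finset.range (2*k)).val := by
      rw [Finset.range_val, Finset.range_val, show 2*(k+1) = (2*k+1)+1 by omega,
        Multiset.range_succ, Multiset.range_succ]
    rw [hr, Multiset.map_cons, Multiset.map_cons]
    have hmc : Multiset.map (fun i => if i = 2*k then x else if i = 2*k+1 then y else a i)
        (Finset.range (2*k)).val = Multiset.map a (Finset.range (2*k)).val := by
      apply Multiset.map_congr rfl
      intro i hi
      have : i < 2*k := by simpa using (Finset.mem_def.mpr hi)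
      have h1 : i ≠ 2*k := by omega
      have h2 : i ≠ 2*k+1 := by omega
      simp [h1, h2]
    rw [hmc, if_pos rfl, if_neg (by omega : 2*k+1 ≠ 2*k), if_pos rfl, ← heq]
    rw [Multiset.cons_add, Multiset.cons_add, Multiset.cons_swap]

lemma Paired.replace (b : ℂ) {S : Multiset ℂ} (hS : Paired ((b-1) ::ₘ S)) :
    Paired (b ::ₘ S) := by
  classical
  obtain ⟨k, a, j, hpair, heq⟩ := hS
  have hmem : (b-1) ∈ (Finset.range (2*k)).val.map a := by
    rw [← heq]
    exact Multiset.mem_add.mpr (Or.inl (Multiset.mem_cons_self _ _))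
  obtain ⟨i₀, hi₀, hai₀⟩ := Multiset.mem_map.mp hmem
  refine ⟨k, Function.update a i₀ b, j, ?_, ?_⟩
  · intro i hi
    rcases eq_or_ne (2*i) i₀ with h2i | h2i
    · obtain ⟨n, hn⟩ := hpair i hi
      refine ⟨n+1, ?_⟩
      rw [← h2i, Function.update_self, Function.update_of_ne (by omega : 2*i+1 ≠ 2*i)]
      have hb : b = a (2*i) + 1 := by rw [h2i, hai₀]; ring
      push_cast
      rw [hb]
      linear_combination hn
    · rcases eq_or_ne (2*i+1) i₀ with h2i' | h2i'
      · obtain ⟨n, hn⟩ := hpair i hi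
        refine ⟨n+1, ?_⟩
        rw [← h2i', Function.update_self, Function.update_of_ne (by omega : 2*i ≠ 2*i+1)]
        have hb : b = a (2*i+1) + 1 := by rw [h2i', hai₀]; ring
        push_cast
        rw [hb]
        linear_combination hn
      · rw [Function.update_of_ne h2i, Function.update_of_ne h2i']
        exact hpair i hi
  · have hnodup : ((Finset.range (2*k)).val).Nodup := (Finset.range (2*k)).nodup
    have hdecomp : (Finset.range (2*k)).val = i₀ ::ₘ ((Finset.range (2*k)).val.erase i₀) :=
      (Multiset.cons_erase hi₀).symm
    have hmapa : (Finset.range (2*k)).val.map a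
        = (b-1) ::ₘ ((Finset.range (2*k)).val.erase i₀).map a := by
      conv_lhs => rw [hdecomp]
      rw [Multiset.map_cons, hai₀]
    have hS' : S + Multiset.replicate j 0 = ((Finset.range (2*k)).val.erase i₀).map a := by
      have := heq
      rw [hmapa, Multiset.cons_add] at this
      exact (Multiset.cons_inj_right _).mp this
    have hmapa' : (Finset.range (2*k)).val.map (Function.update a i₀ b)
        = b ::ₘ ((Finset.range (2*k)).val.erase i₀).map a := by
      conv_lhs => rw [hdecomp]
      rw [Multiset.map_cons, Function.update_self]
      congr 1
      apply Multiset.map_congr rfl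
      intro i hi
      have : i ≠ i₀ := ((Multiset.Nodup.mem_erase_iff hnodup).mp hi).1
      exact Function.update_of_ne this _ _
    rw [hmapa', Multiset.cons_add, hS']

lemma paired_of_symm (n : ℕ) : ∀ S : Multiset ℂ, Multiset.card S ≤ n →
    (∀ z : ℂ, S.count (-z) = S.count z) → Paired S := by
  classical
  induction n with
  | zero =>
    intro S hS _
    rw [Nat.le_zero, Multiset.card_eq_zero] at hS
    rw [hS]; exact Paired.zero
  | succ n ih =>
    intro S hcard hsym
    by_cases hex : ∃ x ∈ S, x ≠ 0
    · obtain ⟨x, hxS, hx0⟩ := hex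
      have hnxx : -x ≠ x := by
        intro h
        apply hx0
        have h2 : (2:ℂ) * x = 0 := by linear_combination -h
        rcases mul_eq_zero.mp h2 with h | h
        · exact absurd h two_ne_zero
        · exact h
      have hnxS : -x ∈ S := by
        rw [← Multiset.count_pos, hsym x]
        exact Multiset.count_pos.mpr hxS
      have hnxS' : -x ∈ S.erase x := by
        rw [← Multiset.count_pos, Multiset.count_erase_of_ne hnxx]
        exact Multiset.count_pos.mpr hnxS
      set S' := (S.erase x).erase (-x) with hS'def
      have hdecomp : S = x ::ₘ (-x) ::ₘ S' := by
        rw [Multiset.cons_erase hnxS', Multiset.cons_erase hxS]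
      have hGa : ∀ z : ℂ, (-z = x) ↔ (z = -x) := by
        intro z; constructor <;> intro h <;> linear_combination -h
      have hGb : ∀ z : ℂ, (-z = -x) ↔ (z = x) := by
        intro z; constructor <;> intro h <;> linear_combination -h
      have hsym' : ∀ z : ℂ, S'.count (-z) = S'.count z := by
        intro z
        have h := hsym z
        rw [hdecomp] at h
        simp only [Multiset.count_cons, hGa, hGb] at h
        split_ifs at h <;> omega
      have hcard' : Multiset.card S' ≤ n := by
        have : Multiset.card S = Multiset.card S' + 2 := by
          rw [hdecomp]; simp
        omega
      have := Paired.cons_pair x (-x) ⟨0, by push_cast; ring⟩ (ih S' hcard' hsym')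
      rwa [← hdecomp] at this
    · push_neg at hex
      have : S = Multiset.replicate (Multiset.card S) 0 :=
        Multiset.eq_replicate_card.mpr hex
      rw [this]; exact Paired.replicate _

lemma exists_top (R : Multiset ℂ) (h : R ≠ 0) : ∃ b ∈ R, b + 1 ∉ R := by
  classical
  by_contra hc
  push_neg at hc
  obtain ⟨b₀, hb₀⟩ := Multiset.exists_mem_of_ne_zero h
  have key : ∀ n : ℕ, b₀ + n ∈ R := by
    intro n
    induction n with
    | zero => simpa using hb₀
    | succ n ihn =>
      have := hc _ ihn
      have he : b₀ + (n:ℂ) + 1 = b₀ + ((n+1 : ℕ) : ℂ) := by push_cast; ring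
      rwa [he] at this
  have hinj : Function.Injective (fun n : ℕ => b₀ + (n:ℂ)) := by
    intro m n hmn
    have : (m:ℂ) = (n:ℂ) := by simpa using hmn
    exact_mod_cast this
  have hsub : (Finset.range (Multiset.card R + 1)).image (fun n : ℕ => b₀ + (n:ℂ))
      ⊆ R.toFinset := by
    intro z hz
    rw [Finset.mem_image] at hz
    obtain ⟨m, _, rfl⟩ := hz
    exact Multiset.mem_toFinset.mpr (key m)
  have h1 := Finset.card_le_card hsub
  rw [Finset.card_image_of_injective _ hinj, Finset.card_range] at h1
  have h2 := R.toFinset_card_le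
  omega

lemma even_card_add_count_half (n : ℕ) : ∀ R : Multiset ℂ, Multiset.card R ≤ n →
    (∀ z : ℂ, R.count z = R.count (1-z)) →
    Even (Multiset.card R + R.count (2⁻¹ : ℂ)) := by
  classical
  induction n with
  | zero =>
    intro R hR _
    rw [Nat.le_zero, Multiset.card_eq_zero] at hR
    subst hR; simp
  | succ n ih =>
    intro R hcard hsym
    rcases eq_or_ne R 0 with rfl | hR0
    · simp
    obtain ⟨z₀, hz₀⟩ := Multiset.exists_mem_of_ne_zero hR0
    have hhalf : ∀ z : ℂ, (1 - z = (2⁻¹:ℂ)) ↔ (z = 2⁻¹) := by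
      intro z; constructor <;> intro h <;> linear_combination -h
    by_cases h0 : z₀ = 2⁻¹
    · subst h0
      set R' := R.erase (2⁻¹ : ℂ) with hR'def
      have hdecomp : R = (2⁻¹:ℂ) ::ₘ R' := (Multiset.cons_erase hz₀).symm
      have hsym' : ∀ z : ℂ, R'.count z = R'.count (1-z) := by
        intro z
        have h := hsym z
        rw [hdecomp] at h
        simp only [Multiset.count_cons, hhalf] at h
        split_ifs at h <;> omega
      have hcard' : Multiset.card R' ≤ n := by
        have : Multiset.card R = Multiset.card R' + 1 := by rw [hdecomp]; simp
        omega
      have hiheven := ih R' hcard' hsym'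
      have hc1 : Multiset.card R = Multiset.card R' + 1 := by rw [hdecomp]; simp
      have hc2 : R.count (2⁻¹:ℂ) = R'.count (2⁻¹:ℂ) + 1 := by
        rw [hdecomp, Multiset.count_cons_self]
      rw [Nat.even_iff] at hiheven ⊢
      omega
    · have hmir : (1 - z₀) ∈ R := by
        rw [← Multiset.count_pos, ← hsym z₀]
        exact Multiset.count_pos.mpr hz₀
      have hne : (1 - z₀) ≠ z₀ := by
        intro h
        exact h0 (by linear_combination -h/2)
      have hmir' : (1 - z₀) ∈ R.erase z₀ := by
        rw [← Multiset.count_pos, Multiset.count_erase_of_ne hne]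
        exact Multiset.count_pos.mpr hmir
      set R' := (R.erase z₀).erase (1 - z₀) with hR'def
      have hdecomp : R = z₀ ::ₘ (1 - z₀) ::ₘ R' := by
        rw [Multiset.cons_erase hmir', Multiset.cons_erase hz₀]
      have hE1 : ∀ z : ℂ, (1 - z = z₀) ↔ (z = 1 - z₀) := by
        intro z; constructor <;> intro h <;> linear_combination -h
      have hE2 : ∀ z : ℂ, (1 - z = 1 - z₀) ↔ (z = z₀) := by
        intro z; constructor <;> intro h <;> linear_combination -h
      have hsym' : ∀ z : ℂ, R'.count z = R'.count (1-z) := by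
        intro z
        have h := hsym z
        rw [hdecomp] at h
        simp only [Multiset.count_cons, hE1, hE2] at h
        split_ifs at h <;> omega
      have hcard' : Multiset.card R' ≤ n := by
        have : Multiset.card R = Multiset.card R' + 2 := by rw [hdecomp]; simp
        omega
      have hiheven := ih R' hcard' hsym'
      have hc1 : Multiset.card R = Multiset.card R' + 2 := by rw [hdecomp]; simp
      have hne1 : (2⁻¹:ℂ) ≠ z₀ := fun h => h0 h.symm
      have hne2 : (2⁻¹:ℂ) ≠ 1 - z₀ := by
        intro h
        exact h0 ((hhalf z₀).mp h.symm)
      have hc2 : R.count (2⁻¹:ℂ) = R'.count (2⁻¹:ℂ) := by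
        rw [hdecomp]
        simp only [Multiset.count_cons, if_neg hne1, if_neg hne2]
        omega
      rw [Nat.even_iff] at hiheven ⊢
      omega

lemma main_comb (n : ℕ) : ∀ S R : Multiset ℂ,
    Multiset.card S + Multiset.card R ≤ n →
    (∀ z : ℂ, S.count (-z) + R.count z = S.count z + R.count (z+1)) →
    (∀ z : ℂ, R.count z = R.count (1-z)) →
    Even (Multiset.card R) → Paired S := by
  classical
  induction n with
  | zero =>
    intro S R hn _ _ _
    have : S = 0 := by
      rw [← Multiset.card_eq_zero]; omega
    rw [this]; exact Paired.zero
  | succ n ih =>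
    intro S R hn h1 h2 h3
    rcases eq_or_ne R 0 with rfl | hR0
    · apply paired_of_symm (Multiset.card S) S le_rfl
      intro z
      have := h1 z
      simpa using this
    · obtain ⟨b, hbR, hb1⟩ := exists_top R hR0
      have hcb1 : R.count (b+1) = 0 := Multiset.count_eq_zero_of_notMem hb1
      have hbS : b ∈ S := by
        rw [← Multiset.count_pos]
        have h := h1 b
        rw [hcb1] at h
        have := Multiset.count_pos.mpr hbR
        omega
      have h1bR' : (1 - b) ∈ R.erase b := by
        rcases eq_or_ne b (1-b) with heq | hne
        · rw [← heq]
          have hb2 : b = 2⁻¹ := by linear_combination heq/2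
          have heven := even_card_add_count_half (Multiset.card R) R le_rfl h2
          have hceven : Even (R.count (2⁻¹:ℂ)) := by
            rw [Nat.even_iff] at heven h3 ⊢
            omega
          have hpos : 0 < R.count (2⁻¹:ℂ) := by
            rw [← hb2]; exact Multiset.count_pos.mpr hbR
          have h2le : 2 ≤ R.count (2⁻¹:ℂ) := by
            rcases hceven with ⟨m, hm⟩; omega
          rw [← Multiset.count_pos, Multiset.count_erase_self, hb2]
          omega
        · rw [← Multiset.count_pos, Multiset.count_erase_of_ne hne.symm, ← h2 b]
          exact Multiset.count_pos.mpr hbR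
      set R₂ := (R.erase b).erase (1-b) with hR₂def
      have hRdecomp : R = b ::ₘ (1-b) ::ₘ R₂ := by
        rw [Multiset.cons_erase h1bR', Multiset.cons_erase hbR]
      set S₀ := S.erase b with hS₀def
      have hSdecomp : S = b ::ₘ S₀ := (Multiset.cons_erase hbS).symm
      have cA : ∀ z : ℂ, (-z = b) ↔ (z = -b) := by
        intro z; constructor <;> intro h <;> linear_combination -h
      have cB : ∀ z : ℂ, (-z = b - 1) ↔ (z = 1 - b) := by
        intro z; constructor <;> intro h <;> linear_combination -h
      have cC : ∀ z : ℂ, (z + 1 = b) ↔ (z = b - 1) := by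
        intro z; constructor <;> intro h <;> linear_combination h
      have cD : ∀ z : ℂ, (z + 1 = 1 - b) ↔ (z = -b) := by
        intro z; constructor <;> intro h <;> linear_combination h
      have cE : ∀ z : ℂ, (1 - z = b) ↔ (z = 1 - b) := by
        intro z; constructor <;> intro h <;> linear_combination -h
      have cF : ∀ z : ℂ, (1 - z = 1 - b) ↔ (z = b) := by
        intro z; constructor <;> intro h <;> linear_combination -h
      have h1' : ∀ z : ℂ, ((b-1) ::ₘ S₀).count (-z) + R₂.count z
          = ((b-1) ::ₘ S₀).count z + R₂.count (z+1) := by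
        intro z
        have h := h1 z
        rw [hRdecomp, hSdecomp] at h
        simp only [Multiset.count_cons, cA, cB, cC, cD] at h ⊢
        split_ifs at h ⊢ <;> omega
      have h2' : ∀ z : ℂ, R₂.count z = R₂.count (1-z) := by
        intro z
        have h := h2 z
        rw [hRdecomp] at h
        simp only [Multiset.count_cons, cE, cF] at h
        split_ifs at h <;> omega
      have h3' : Even (Multiset.card R₂) := by
        have : Multiset.card R = Multiset.card R₂ + 2 := by rw [hRdecomp]; simp
        rw [Nat.even_iff] at h3 ⊢
        omega
      have hcard : Multiset.card ((b-1) ::ₘ S₀) + Multiset.card R₂ ≤ n := by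
        have hcR : Multiset.card R = Multiset.card R₂ + 2 := by rw [hRdecomp]; simp
        have hcS : Multiset.card S = Multiset.card S₀ + 1 := by rw [hSdecomp]; simp
        simp only [Multiset.card_cons]
        omega
      have hP := ih _ _ hcard h1' h2' h3'
      have := Paired.replace b hP
      rwa [← hSdecomp] at this

/-! ### Algebraic part -/

lemma compNeg_coeff (p : Polynomial ℂ) (n : ℕ) :
    (p.comp (-Polynomial.X)).coeff n = (-1)^n * p.coeff n := by
  induction p using Polynomial.induction_on' with
  | add p q hp hq => simp [add_comp, hp, hq, mul_add]
  | monomial k c =>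
    rw [← C_mul_X_pow_eq_monomial, mul_comp, C_comp, pow_comp, X_comp]
    have h1 : (-Polynomial.X : Polynomial ℂ)^k = Polynomial.C ((-1:ℂ)^k) * Polynomial.X^k := by
      rw [neg_pow]
      congr 1
      simp
    rw [h1, ← mul_assoc, ← C_mul, Polynomial.coeff_C_mul, Polynomial.coeff_X_pow,
      Polynomial.coeff_C_mul, Polynomial.coeff_X_pow]
    rcases eq_or_ne n k with rfl | hne
    · simp [mul_comm]
    · simp [hne]

lemma coe_comp_neg (Q : Polynomial ℂ) :
    ((Q.comp (-Polynomial.X) : Polynomial ℂ) : PS) = negU (Q : PS) := by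
  ext n
  rw [Polynomial.coeff_coe, compNeg_coeff, negU, PowerSeries.coeff_rescale,
    Polynomial.coeff_coe]

lemma negU_even {γ : PS} (hγ : EvenOne γ) : negU γ = γ := by
  ext n
  rw [negU, PowerSeries.coeff_rescale]
  rcases Nat.even_or_odd n with he | ho
  · rw [he.neg_one_pow, one_mul]
  · rw [hγ.2 n ho, mul_zero]

lemma reflect_reflect (N : ℕ) (f : Polynomial ℂ) : reflect N (reflect N f) = f := by
  ext i
  simp [Polynomial.coeff_reflect]

lemma reflect_comp_neg (p : Polynomial ℂ) (N : ℕ) (hp : p.natDegree ≤ N) :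
    reflect N (p.comp (-Polynomial.X))
      = Polynomial.C ((-1:ℂ)^N) * ((reflect N p).comp (-Polynomial.X)) := by
  ext n
  rw [Polynomial.coeff_reflect, compNeg_coeff, Polynomial.coeff_C_mul, compNeg_coeff,
    Polynomial.coeff_reflect]
  rcases le_or_gt n N with h | h
  · rw [Polynomial.revAt_le h]
    have h2 : ((-1:ℂ))^N * (-1)^n = (-1)^(N - n) := by
      have : N + n = (N - n) + 2*n := by omega
      rw [← pow_add, this, pow_add, pow_mul]
      norm_num
    rw [← h2]; ring
  · rw [Polynomial.revAt_eq_self_of_lt h]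
    have : p.coeff n = 0 := Polynomial.coeff_eq_zero_of_natDegree_lt (lt_of_le_of_lt hp h)
    rw [this]; ring

lemma reflect_one_linear (x : ℂ) :
    reflect 1 (Polynomial.X - Polynomial.C x) = 1 + Polynomial.C (-x) * Polynomial.X := by
  have h : (Polynomial.X - Polynomial.C x : Polynomial ℂ)
      = Polynomial.C (-x) * Polynomial.X^0 + Polynomial.X^1 := by
    simp [map_neg]; ring
  rw [h, reflect_add, Polynomial.reflect_C_mul_X_pow, Polynomial.reflect_monomial]
  rw [Polynomial.revAt_le (by omega : (0:ℕ) ≤ 1), Polynomial.revAt_le (le_refl 1)]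
  norm_num
  ring

lemma natDegree_prod_linear_le (s : Multiset ℂ) :
    ((s.map fun x => Polynomial.X - Polynomial.C x).prod).natDegree ≤ Multiset.card s := by
  refine le_trans (Polynomial.natDegree_multiset_prod_le _) ?_
  rw [Multiset.map_map]
  have : Multiset.map (Polynomial.natDegree ∘ fun x => Polynomial.X - Polynomial.C x) s
      = Multiset.map (fun _ => 1) s := by
    apply Multiset.map_congr rfl
    intro x _
    simp [natDegree_X_sub_C]
  rw [this, Multiset.map_const', Multiset.sum_replicate, smul_eq_mul, mul_one]

lemma refl_prod (s : Multiset ℂ) :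
    reflect (Multiset.card s) ((s.map fun x => Polynomial.X - Polynomial.C x).prod)
      = (s.map fun x => 1 + Polynomial.C (-x) * Polynomial.X).prod := by
  induction s using Multiset.induction with
  | empty =>
    simp only [Multiset.map_zero, Multiset.prod_zero, Multiset.card_zero]
    ext i
    rcases Nat.eq_zero_or_pos i with rfl | hpos
    · simp
    · rw [Polynomial.coeff_reflect, Polynomial.revAt_eq_self_of_lt hpos]
  | cons x s ih =>
    rw [Multiset.map_cons, Multiset.prod_cons, Multiset.card_cons,
      show Multiset.card s + 1 = 1 + Multiset.card s from by omega,
      reflect_mul (Polynomial.X - Polynomial.C x) _ (le_of_eq (natDegree_X_sub_C x))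
        (natDegree_prod_linear_le s),
      ih, reflect_one_linear, Multiset.map_cons, Multiset.prod_cons]

lemma coe_multiset_prod (s : Multiset (Polynomial ℂ)) :
    ((s.prod : Polynomial ℂ) : PS) = (s.map Polynomial.toPowerSeries).prod := by
  induction s using Multiset.induction with
  | empty => simp
  | cons p s ih =>
    rw [Multiset.prod_cons, Multiset.map_cons, Multiset.prod_cons, Polynomial.coe_mul, ih]

end DAEG
open DAEG in
/-- If μ(−u) ⇒ μ(u) and γ is even with γ·μ a polynomial in u⁻¹, then γ·μ factors as
(1−a₁u⁻¹)⋯(1−a_{2k}u⁻¹) with a_{2i−1} + a_{2i} ∈ ℤ_{≥0}. -/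
theorem darrow_any_even_gamma (μ γ : PS) (hμ : One1 μ)
    (hd : DArrow (negU μ) μ) (hγ : EvenOne γ) (hp : IsPolyPS (γ * μ)) :
    ∃ (k : ℕ) (a : ℕ → ℂ),
      (∀ i < k, IsNonnegInt (a (2*i) + a (2*i+1))) ∧
      γ * μ = ∏ i ∈ Finset.range (2*k), linF (-(a i)) := by
  classical
  obtain ⟨Q, hQ⟩ := hp
  obtain ⟨P, hPm, hPev, hPsym, hPeq⟩ := hd
  have hγ1 : PowerSeries.constantCoeff γ = 1 := hγ.1
  have hμ1 : PowerSeries.constantCoeff μ = 1 := hμ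
  -- basic facts about Q
  have hc0 : Q.coeff 0 = 1 := by
    have h := congrArg (PowerSeries.constantCoeff) hQ
    rw [Polynomial.constantCoeff_coe, map_mul, hγ1, hμ1, mul_one] at h
    exact h
  have hntd : Q.natTrailingDegree = 0 :=
    Polynomial.natTrailingDegree_eq_zero.mpr (Or.inr (by rw [hc0]; exact one_ne_zero))
  have htc : Q.trailingCoeff = 1 := by
    unfold Polynomial.trailingCoeff
    rw [hntd, hc0]
  have hAmonic : Q.reverse.Monic := by
    have h1 : Q.reverse.leadingCoeff = 1 := by
      rw [Polynomial.reverse_leadingCoeff, htc]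
    exact h1
  have hAdeg : Q.reverse.natDegree = Q.natDegree := by
    rw [Polynomial.reverse_natDegree, hntd, Nat.sub_zero]
  have hsplitsA := IsAlgClosed.splits Q.reverse
  have hScard : Multiset.card Q.reverse.roots = Q.natDegree := by
    rw [(Polynomial.splits_iff_card_roots).mp hsplitsA, hAdeg]
  have hAfact : Q.reverse
      = (Q.reverse.roots.map fun x => Polynomial.X - Polynomial.C x).prod :=
    hsplitsA.eq_prod_roots_of_monic hAmonic
  have hsplitsP := IsAlgClosed.splits P
  have hRcard : Multiset.card P.roots = P.natDegree :=
    (Polynomial.splits_iff_card_roots).mp hsplitsP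
  have hPfact : P = (P.roots.map fun x => Polynomial.X - Polynomial.C x).prod :=
    hsplitsP.eq_prod_roots_of_monic hPm
  -- power series identity multiplied through by γ
  have key : negU (γ * μ) * lowerP P = (γ * μ) * lowerP (P.comp (Polynomial.X + 1)) := by
    have hmulU : negU (γ * μ) = negU γ * negU μ := map_mul (PowerSeries.rescale (-1)) γ μ
    rw [hmulU, negU_even hγ]
    calc γ * negU μ * lowerP P = γ * (negU μ * lowerP P) := by ring
      _ = γ * (μ * lowerP (P.comp (Polynomial.X + 1))) := by rw [hPeq]
      _ = γ * μ * lowerP (P.comp (Polynomial.X + 1)) := by ring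
  -- convert to polynomial identity
  have hE : Q.comp (-Polynomial.X) * P.reverse = Q * (P.comp (Polynomial.X + 1)).reverse := by
    rw [← Polynomial.coe_inj, Polynomial.coe_mul, Polynomial.coe_mul, coe_comp_neg, hQ]
    exact key
  -- reflect the identity
  have hXadd : (Polynomial.X + 1 : Polynomial ℂ).natDegree = 1 := by
    rw [show (Polynomial.X + 1 : Polynomial ℂ) = Polynomial.X + Polynomial.C 1 by rw [map_one]]
    exact Polynomial.natDegree_X_add_C 1
  have hdP1 : (P.comp (Polynomial.X + 1)).natDegree = P.natDegree := by
    rw [Polynomial.natDegree_comp, hXadd, mul_one]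
  have hNdeg : (Q.comp (-Polynomial.X)).natDegree ≤ Q.natDegree := by
    refine le_trans (Polynomial.natDegree_comp_le) ?_
    rw [Polynomial.natDegree_neg, Polynomial.natDegree_X, mul_one]
  have hrefl := congrArg (reflect (Q.natDegree + P.natDegree)) hE
  rw [Polynomial.reflect_mul _ _ hNdeg P.reverse_natDegree_le,
    Polynomial.reflect_mul _ _ (le_refl Q.natDegree)
      (le_trans (P.comp (Polynomial.X + 1)).reverse_natDegree_le (le_of_eq hdP1))] at hrefl
  have hre1 : reflect P.natDegree P.reverse = P := reflect_reflect P.natDegree P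
  have hre2 : reflect Q.natDegree Q = Q.reverse := rfl
  have hre3 : reflect P.natDegree ((P.comp (Polynomial.X + 1)).reverse)
      = P.comp (Polynomial.X + 1) := by
    have h : (P.comp (Polynomial.X + 1)).reverse
        = reflect P.natDegree (P.comp (Polynomial.X + 1)) := by
      show reflect (P.comp (Polynomial.X + 1)).natDegree _ = _
      rw [hdP1]
    rw [h, reflect_reflect]
  rw [hre1, hre2, hre3] at hrefl
  -- compute the reflect of Q.comp(-X)
  have hCpow : Polynomial.C ((-1:ℂ)^Q.natDegree) = ((-1 : Polynomial ℂ))^Q.natDegree := by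
    rw [map_pow, map_neg, map_one]
  have hAcompneg : Q.reverse.comp (-Polynomial.X)
      = ((-1 : Polynomial ℂ))^Q.natDegree
        * (Q.reverse.roots.map fun x => Polynomial.X - Polynomial.C (-x)).prod := by
    conv_lhs => rw [hAfact]
    rw [Polynomial.multiset_prod_comp, Multiset.map_map]
    have hstep : Multiset.map
        ((fun p : Polynomial ℂ => p.comp (-Polynomial.X)) ∘ fun x => Polynomial.X - Polynomial.C x)
        Q.reverse.roots
        = Multiset.map
          (fun x => (-1 : Polynomial ℂ) * (Polynomial.X - Polynomial.C (-x))) Q.reverse.roots := by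
      apply Multiset.map_congr rfl
      intro x _
      simp only [Function.comp_apply, Polynomial.sub_comp, Polynomial.X_comp, Polynomial.C_comp,
        map_neg]
      ring
    rw [hstep,
      Multiset.prod_map_mul (m := Q.reverse.roots) (f := fun _ => (-1 : Polynomial ℂ))
        (g := fun x => Polynomial.X - Polynomial.C (-x)),
      Multiset.map_const', Multiset.prod_replicate, hScard]
  have hreflN : reflect Q.natDegree (Q.comp (-Polynomial.X))
      = (Q.reverse.roots.map fun x => Polynomial.X - Polynomial.C (-x)).prod := by
    rw [reflect_comp_neg Q Q.natDegree le_rfl, hre2, hAcompneg, hCpow, ← mul_assoc, ← pow_add,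
      Even.neg_one_pow ⟨Q.natDegree, rfl⟩, one_mul]
  rw [hreflN] at hrefl
  -- now hrefl : ∏(X - C(-x)) * P = Q.reverse * P.comp(X+1); pass to roots
  have hAmirfact : (Q.reverse.roots.map fun x => Polynomial.X - Polynomial.C (-x)).prod
      = ((Q.reverse.roots.map Neg.neg).map fun x => Polynomial.X - Polynomial.C x).prod := by
    rw [Multiset.map_map]
    rfl
  rw [hAmirfact] at hrefl
  have hAmirMonic : (((Q.reverse.roots.map Neg.neg).map
      fun x => Polynomial.X - Polynomial.C x).prod).Monic :=
    Polynomial.monic_multiset_prod_of_monic _ _ (fun x _ => Polynomial.monic_X_sub_C x)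
  have hne : ((Q.reverse.roots.map Neg.neg).map
      (fun x => Polynomial.X - Polynomial.C x)).prod * P ≠ 0 :=
    (hAmirMonic.mul hPm).ne_zero
  have hrne : Q.reverse * P.comp (Polynomial.X + 1) ≠ 0 := by rw [← hrefl]; exact hne
  have hP1fact : P.comp (Polynomial.X + 1)
      = ((P.roots.map fun b => b - 1).map fun x => Polynomial.X - Polynomial.C x).prod := by
    conv_lhs => rw [hPfact]
    rw [Polynomial.multiset_prod_comp, Multiset.map_map, Multiset.map_map]
    apply congrArg
    apply Multiset.map_congr rfl
    intro b _
    simp only [Function.comp_apply, Polynomial.sub_comp, Polynomial.X_comp, Polynomial.C_comp,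
      map_sub, map_one]
    ring
  have hroots := congrArg Polynomial.roots hrefl
  rw [Polynomial.roots_mul hne, Polynomial.roots_mul hrne,
    Polynomial.roots_multiset_prod_X_sub_C, hP1fact,
    Polynomial.roots_multiset_prod_X_sub_C] at hroots
  -- counting identities
  have h1 : ∀ z : ℂ, (Q.reverse.roots).count (-z) + P.roots.count z
      = (Q.reverse.roots).count z + P.roots.count (z+1) := by
    intro z
    have h := congrArg (Multiset.count z) hroots
    rw [Multiset.count_add, Multiset.count_add] at h
    have hmapneg : Multiset.count z (Q.reverse.roots.map Neg.neg)
        = (Q.reverse.roots).count (-z) := by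
      have := Multiset.count_map_eq_count' Neg.neg Q.reverse.roots neg_injective (-z)
      simpa using this
    have hmapsub : Multiset.count z (P.roots.map fun b => b - 1) = P.roots.count (z+1) := by
      have hinj : Function.Injective (fun b : ℂ => b - 1) := fun a b hab => by
        dsimp at hab; linear_combination hab
      have := Multiset.count_map_eq_count' _ P.roots hinj (z+1)
      simpa using this
    rw [hmapneg, hmapsub] at h
    exact h
  have hmapinv : P.roots.map (fun b => 1 - b) = P.roots := by
    have h := hPsym
    conv_lhs at h => rw [hPfact]
    rw [Polynomial.multiset_prod_comp, Multiset.map_map] at h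
    have hstep : Multiset.map
        ((fun p : Polynomial ℂ => p.comp (1 - Polynomial.X)) ∘
          fun x => Polynomial.X - Polynomial.C x) P.roots
        = Multiset.map
          (fun b => (-1 : Polynomial ℂ) * (Polynomial.X - Polynomial.C (1 - b))) P.roots := by
      apply Multiset.map_congr rfl
      intro b _
      simp only [Function.comp_apply, Polynomial.sub_comp, Polynomial.X_comp, Polynomial.C_comp,
        map_sub, map_one]
      ring
    rw [hstep,
      Multiset.prod_map_mul (m := P.roots) (f := fun _ => (-1 : Polynomial ℂ))
        (g := fun b => Polynomial.X - Polynomial.C (1 - b)),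
      Multiset.map_const', Multiset.prod_replicate] at h
    have h' := congrArg Polynomial.roots h.symm
    have hCpow2 : ((-1 : Polynomial ℂ))^(Multiset.card P.roots)
        = Polynomial.C ((-1:ℂ)^(Multiset.card P.roots)) := by
      rw [map_pow, map_neg, map_one]
    rw [hCpow2, Polynomial.roots_C_mul _ (pow_ne_zero _ (neg_ne_zero.mpr one_ne_zero)),
      show Multiset.map (fun b : ℂ => Polynomial.X - Polynomial.C (1 - b)) P.roots
        = (P.roots.map (fun b => 1 - b)).map (fun x => Polynomial.X - Polynomial.C x) from by
          rw [Multiset.map_map]; rfl,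
      Polynomial.roots_multiset_prod_X_sub_C] at h'
    exact h'.symm
  have h2 : ∀ z : ℂ, P.roots.count z = P.roots.count (1-z) := by
    intro z
    have hinj : Function.Injective (fun b : ℂ => 1 - b) := fun a b hab => by
      dsimp at hab; linear_combination -hab
    have h := Multiset.count_map_eq_count' _ P.roots hinj z
    rw [hmapinv] at h
    exact h.symm
  have h3 : Even (Multiset.card P.roots) := by rw [hRcard]; exact hPev
  -- apply the combinatorial lemma
  obtain ⟨k, a, j, hpair, hset⟩ :=
    main_comb (Multiset.card Q.reverse.roots + Multiset.card P.roots) Q.reverse.roots P.roots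
      le_rfl h1 h2 h3
  refine ⟨k, a, hpair, ?_⟩
  rw [← hQ]
  -- express Q as a product of linear factors in X
  have hQfact : (Q : PS) = (Q.reverse.roots.map fun x => linF (-x)).prod := by
    have hQr : Q = reflect Q.natDegree Q.reverse := (reflect_reflect Q.natDegree Q).symm
    have e1 : reflect Q.natDegree Q.reverse
        = reflect (Multiset.card Q.reverse.roots)
            ((Q.reverse.roots.map fun x => Polynomial.X - Polynomial.C x).prod) := by
      rw [← hScard]
      exact congrArg _ hAfact
    calc (Q : PS) = ((reflect Q.natDegree Q.reverse : Polynomial ℂ) : PS) := by rw [← hQr]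
      _ = (((Q.reverse.roots.map
            fun x => 1 + Polynomial.C (-x) * Polynomial.X).prod : Polynomial ℂ) : PS) := by
          rw [e1, refl_prod]
      _ = (Q.reverse.roots.map fun x => linF (-x)).prod := by
          rw [coe_multiset_prod]
          congr 1
          rw [Multiset.map_map]
          apply Multiset.map_congr rfl
          intro x _
          show ((1 + Polynomial.C (-x) * Polynomial.X : Polynomial ℂ) : PS) = linF (-x)
          rw [Polynomial.coe_add, Polynomial.coe_one, Polynomial.coe_mul, Polynomial.coe_C,
            Polynomial.coe_X]
          rfl
  have hsetprod : (Q.reverse.roots.map fun x => linF (-x)).prod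
      = Multiset.prod (((Finset.range (2*k)).val.map a).map (fun x => linF (-x))) := by
    have h0 : ((Multiset.replicate j (0:ℂ)).map fun x => linF (-x)).prod = 1 := by
      rw [Multiset.map_replicate, Multiset.prod_replicate]
      have : linF (-(0:ℂ)) = 1 := by simp [linF]
      rw [this, one_pow]
    calc (Q.reverse.roots.map fun x => linF (-x)).prod
        = (((Q.reverse.roots + Multiset.replicate j 0)).map fun x => linF (-x)).prod := by
          rw [Multiset.map_add, Multiset.prod_add, h0, mul_one]
      _ = _ := by rw [hset]
  rw [hQfact, hsetprod, Finset.prod_eq_multiset_prod, Multiset.map_map]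
  rfl
end
end

section
/- Let (a₁,…,a_{2k+1}) be a list of complex numbers with a_{2i−1} + a_{2i} ∈ ℤ_{≥0} for i = 1,…,k, and suppose a_{2k+1} is the ♯′-special element of (a₁,…,a_{2k+1}). Then −1−a_{2k+1} is the ♯′-special element of the list (a₁,…,a_{2k}, −1−a_{2k+1}). -/
open PowerSeries Polynomial

noncomputable section

/-- The ♯′-condition on the list `a 0, …, a (2k)` (0-indexed): for each `i < k`,
whenever `{a p + a q : 2i ≤ p < q ≤ 2k} ∩ ℤ_{≥0}` is non-empty, `a (2i) + a (2i+1)`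
is its minimal element for the order `x ≥ y ↔ x - y ∈ ℤ_{≥0}`. -/
def SharpCond (k : ℕ) (a : ℕ → ℂ) : Prop :=
  ∀ i < k,
    (∃ p q, 2*i ≤ p ∧ p < q ∧ q ≤ 2*k ∧ IsNonnegInt (a p + a q)) →
      IsNonnegInt (a (2*i) + a (2*i+1)) ∧
      ∀ p q, 2*i ≤ p → p < q → q ≤ 2*k → IsNonnegInt (a p + a q) →
        IsNonnegInt (a p + a q - (a (2*i) + a (2*i+1)))

/-- `b` is a re-indexing (permutation) of the first `m` entries of `a`. -/
def PermOf (m : ℕ) (b a : ℕ → ℂ) : Prop :=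
  ∃ σ : Equiv.Perm (Fin m), ∀ i : Fin m, b i = a (σ i)

/-- `x` is a ♯′-special element of the list `a 0, …, a (2k)`. -/
def IsSharpSpecial' (k : ℕ) (a : ℕ → ℂ) (x : ℂ) : Prop :=
  ∃ b : ℕ → ℂ, PermOf (2*k+1) b a ∧ SharpCond k b ∧ b (2*k) = x
lemma isnn_of_eq_int {w : ℂ} {z : ℤ} (hz : 0 ≤ z) (hw : w = (z:ℂ)) : IsNonnegInt w :=
  ⟨z.toNat, by rw [hw]; exact_mod_cast (Int.toNat_of_nonneg hz).symm⟩

lemma int_of_isnn {w : ℂ} {z : ℤ} (hw : w = (z:ℂ)) (h : IsNonnegInt w) : 0 ≤ z := by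
  obtain ⟨n, hn⟩ := h
  rw [hw] at hn
  have : z = (n:ℤ) := by exact_mod_cast hn
  omega

lemma core (k : ℕ) (b : ℕ → ℂ) (pi : ℕ → ℕ)
    (hpinv : ∀ p, p < 2*k+1 → pi (pi p) = p)
    (hplt : ∀ p, p < 2*k+1 → pi p < 2*k+1)
    (hplast : pi (2*k) = 2*k)
    (hpne : ∀ p, p < 2*k → pi p ≠ p)
    (hpsum : ∀ p, p < 2*k → IsNonnegInt (b p + b (pi p)))
    (hsharp : SharpCond k b) :
    SharpCond k (fun n => if n = 2*k then -1 - b (2*k) else b n) := by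
  set c := b (2*k) with hc
  have hplt2k : ∀ p, p < 2*k → pi p < 2*k := by
    intro p hp
    have h1 : pi p < 2*k+1 := hplt p (by omega)
    rcases Nat.lt_or_ge (pi p) (2*k) with h | h
    · exact h
    · exfalso
      have h2 : pi p = 2*k := by omega
      have h3 := hpinv p (by omega)
      rw [h2, hplast] at h3
      omega
  set flip : ℕ → ℕ := fun p => if p % 2 = 0 then p + 1 else p - 1 with hflip
  have hflip_lt : ∀ p, p < 2*k → flip p < 2*k := by
    intro p hp
    simp only [hflip]
    split <;> omega
  have hflip_invol : ∀ p, p < 2*k → flip (flip p) = p := by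
    intro p hp
    by_cases h : p % 2 = 0
    · have h2 : (p+1) % 2 = 1 := by omega
      simp only [hflip, if_pos h, h2]
      norm_num
    · have h1 : p % 2 = 1 := by omega
      have h2 : (p-1) % 2 = 0 := by omega
      simp only [hflip, if_neg h, if_pos h2]
      omega
  have hflip_ne : ∀ p, p < 2*k → flip p ≠ p := by
    intro p hp
    simp only [hflip]
    split <;> omega
  have hflip_ge : ∀ p, p < 2*k → 2*(p/2) ≤ flip p := by
    intro p hp
    simp only [hflip]
    split <;> omega
  have hflip_pair : ∀ p, p < 2*k → b p + b (flip p) = b (2*(p/2)) + b (2*(p/2)+1) := by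
    intro p hp
    by_cases h : p % 2 = 0
    · have h1 : p = 2*(p/2) := by omega
      have h2 : flip p = 2*(p/2)+1 := by simp only [hflip, if_pos h]; omega
      rw [h2]; nth_rewrite 1 [h1]; ring
    · have h1 : p = 2*(p/2)+1 := by omega
      have h2 : flip p = 2*(p/2) := by simp only [hflip, if_neg h]; omega
      rw [h2]; nth_rewrite 1 [h1]; ring
  set S : ℕ → Prop := fun i =>
    ∃ p q, 2*i ≤ p ∧ p < q ∧ q ≤ 2*k ∧ IsNonnegInt (b p + b q) with hS
  have hsharp' : ∀ i, i < k → S i →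
      IsNonnegInt (b (2*i) + b (2*i+1)) ∧
      ∀ p q, 2*i ≤ p → p < q → q ≤ 2*k → IsNonnegInt (b p + b q) →
        IsNonnegInt (b p + b q - (b (2*i) + b (2*i+1))) := by
    intro i hik hSi
    exact hsharp i hik hSi
  have lemA : ∀ i, i < k → ∀ p, 2*i ≤ p → p < 2*k → ∀ d : ℕ, b p = c + 1 + d →
      S i ∧ ∀ si : ℕ, b (2*i) + b (2*i+1) = si → si ≤ d := by
    intro i hik p hip hp2k d hd
    set t := p / 2 with ht_def
    have ht : t < k := by omega
    have hit : i ≤ t := by omega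
    by_cases hSt : S t
    · obtain ⟨hnn, hmin⟩ := hsharp' t ht hSt
      obtain ⟨st, hst⟩ := hnn
      set w := flip p with hw_def
      have hw1 : 2*t ≤ w := hflip_ge p hp2k
      have hw2 : w < 2*k := hflip_lt p hp2k
      have hsum : b p + b w = (st : ℂ) := by
        rw [hw_def, hflip_pair p hp2k, ← ht_def]; exact hst
      have hwc : b w + b (2*k) = (st:ℂ) - 1 - d := by
        linear_combination hsum - hd
      have hnotnn : ¬ IsNonnegInt (b w + b (2*k)) := by
        intro hcontra
        have h2 := hmin w (2*k) hw1 hw2 le_rfl hcontra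
        have h3 : (0:ℤ) ≤ ((st:ℤ) - 1 - d) - st :=
          int_of_isnn (by push_cast; linear_combination hwc - hst) h2
        omega
      have hstd : st ≤ d := by
        by_contra hlt
        exact hnotnn (isnn_of_eq_int (z := (st:ℤ) - 1 - d) (by omega)
          (by push_cast; linear_combination hwc))
      have hSi : S i := ⟨2*t, 2*t+1, by omega, by omega, by omega, ⟨st, hst⟩⟩
      refine ⟨hSi, ?_⟩
      intro si hsi
      obtain ⟨_, hmini⟩ := hsharp' i hik hSi
      have h3 := hmini (2*t) (2*t+1) (by omega) (by omega) (by omega) ⟨st, hst⟩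
      have h4 : (0:ℤ) ≤ (st : ℤ) - si :=
        int_of_isnn (w := b (2*t) + b (2*t+1) - (b (2*i) + b (2*i+1)))
          (by push_cast; linear_combination hst - hsi) h3
      omega
    · exfalso
      have hSk : ¬ S k := by
        rintro ⟨p', q', h1, h2, h3, -⟩; omega
      set i₀ := sInf {j | ¬ S j} with hi₀
      have hne0 : {j | ¬ S j}.Nonempty := ⟨k, hSk⟩
      have hi₀mem : ¬ S i₀ := Nat.sInf_mem hne0
      have hi₀le : i₀ ≤ t := Nat.sInf_le (by exact hSt)
      have hi₀k : i₀ ≤ k := Nat.sInf_le (by exact hSk)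
      have hi₀S : ∀ j, j < i₀ → S j := by
        intro j hj
        have h1 := Nat.notMem_of_lt_sInf (hi₀ ▸ hj)
        simpa using h1
      have hE : ∀ p' q', 2*i₀ ≤ p' → p' < q' → q' ≤ 2*k →
          ¬ IsNonnegInt (b p' + b q') := by
        intro p' q' h1 h2 h3 h4
        exact hi₀mem ⟨p', q', h1, h2, h3, h4⟩
      -- the chain
      set F : ℕ → ℕ := fun q => flip (pi q) with hF
      set x : ℕ → ℕ := fun j => F^[j] p with hx
      have hx0 : x 0 = p := rfl
      have hxsucc : ∀ j, x (j+1) = flip (pi (x j)) := by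
        intro j
        simp only [hx, Function.iterate_succ_apply', hF]
      have hxlt : ∀ j, x j < 2*k := by
        intro j
        induction j with
        | zero => exact hp2k
        | succ n ih => rw [hxsucc]; exact hflip_lt _ (hplt2k _ ih)
      have hcancel : ∀ j1 j2, x (j1+1) = x (j2+1) → x j1 = x j2 := by
        intro j1 j2 hj
        have e : ∀ j, pi (flip (x (j+1))) = x j := by
          intro j
          rw [hxsucc j, hflip_invol _ (hplt2k _ (hxlt j))]
          exact hpinv _ (by have := hxlt j; omega)
        rw [← e j1, ← e j2, hj]
      -- a period
      have hper : ∃ P, 1 ≤ P ∧ x P = p := by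
        have main : ∀ u1 u2, u1 < u2 → x u1 = x u2 → ∃ P, 1 ≤ P ∧ x P = p := by
          intro j1 j2 hlt heq
          have key : ∀ v, v ≤ j1 → x (j1 - v) = x (j1 - v + (j2 - j1)) := by
            intro v hv
            induction v with
            | zero =>
              simpa [Nat.sub_zero, show j1 + (j2 - j1) = j2 by omega] using heq
            | succ u ih =>
              have hu : u ≤ j1 := by omega
              have h1 := ih hu
              have e1 : j1 - u = (j1 - (u+1)) + 1 := by omega
              rw [e1] at h1
              have e3 : j1 - (u+1) + 1 + (j2 - j1) = (j1 - (u+1) + (j2 - j1)) + 1 := by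
                omega
              rw [e3] at h1
              exact hcancel _ _ h1
          have h2 := key j1 le_rfl
          simp only [Nat.sub_self, Nat.zero_add, hx0] at h2
          exact ⟨j2 - j1, by omega, h2.symm⟩
        have hmap : ∀ j ∈ Finset.range (2*k+1), x j ∈ Finset.range (2*k) := by
          intro j _
          exact Finset.mem_range.mpr (hxlt j)
        obtain ⟨j1, hj1, j2, hj2, hne, heq⟩ :=
          Finset.exists_ne_map_eq_of_card_lt_of_maps_to
            (by simp : (Finset.range (2*k)).card < (Finset.range (2*k+1)).card) hmap
        rcases Nat.lt_or_ge j1 j2 with hlt | hge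
        · exact main j1 j2 hlt heq
        · exact main j2 j1 (by omega) heq.symm
      obtain ⟨P, hP1, hPx⟩ := hper
      -- J : first time the pi-image is in the garbage region
      have hTne : ∃ j, 1 ≤ j ∧ 2*i₀ ≤ pi (x (j-1)) := by
        refine ⟨P, hP1, ?_⟩
        have h1 : x P = flip (pi (x (P-1))) := by
          have := hxsucc (P-1)
          rwa [show P - 1 + 1 = P by omega] at this
        have h2 : pi (x (P-1)) = flip p := by
          have h3 : flip (x P) = flip (flip (pi (x (P-1)))) := by rw [h1]
          rw [hflip_invol _ (hplt2k _ (hxlt (P-1))), hPx] at h3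
          exact h3.symm
        rw [h2]
        have := hflip_ge p hp2k
        omega
      set T := {j | 1 ≤ j ∧ 2*i₀ ≤ pi (x (j-1))} with hT
      set J := sInf T with hJ
      have hJmem : J ∈ T := Nat.sInf_mem hTne
      obtain ⟨hJ1, hJg⟩ := hJmem
      have hJmin : ∀ j, 1 ≤ j → j < J → pi (x (j-1)) < 2*i₀ := by
        intro j h1 h2
        have h3 := Nat.notMem_of_lt_sInf (hJ ▸ h2)
        simp only [hT, Set.mem_setOf_eq, not_and, not_le] at h3
        exact h3 h1
      -- the invariant
      have hinv : ∀ j, j < J → ∃ dj : ℤ, b (x j) = c + 1 + dj ∧ dj ≤ (d:ℤ) := by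
        intro j hjJ
        induction j with
        | zero =>
          refine ⟨d, ?_, le_rfl⟩
          rw [hx0]
          exact_mod_cast hd
        | succ j ih =>
          obtain ⟨dj, hdj, hdjle⟩ := ih (by omega)
          set h := pi (x j) with hh
          have hhgood : h < 2*i₀ := by
            have := hJmin (j+1) (by omega) hjJ
            simpa using this
          have hh2k : h < 2*k := hplt2k _ (hxlt j)
          set th := h / 2 with hth
          have hthi₀ : th < i₀ := by omega
          have hthk : th < k := by omega
          obtain ⟨⟨st, hst⟩, hmin⟩ := hsharp' th hthk (hi₀S th hthi₀)
          obtain ⟨n, hn⟩ := hpsum (x j) (hxlt j)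
          rw [← hh] at hn
          have hbh : b h = (n:ℂ) - c - 1 - dj := by linear_combination hn - hdj
          have hxj1 : x (j+1) = flip h := hxsucc j
          have hpair : b h + b (flip h) = (st:ℂ) := by
            rw [hflip_pair h hh2k, ← hth]; exact hst
          refine ⟨(st:ℤ) - n + dj, ?_, ?_⟩
          · rw [hxj1]
            push_cast
            linear_combination hpair - hbh
          · -- use the pair (h, p)
            have hhp : h < p := by omega
            have hsum2 : b h + b p = (n:ℂ) - dj + d := by
              linear_combination hbh + hd
            have hnn2 : IsNonnegInt (b h + b p) :=
              isnn_of_eq_int (z := (n:ℤ) - dj + d) (by omega)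
                (by push_cast; linear_combination hsum2)
            have h5 := hmin h p (by omega) hhp (by omega) hnn2
            have h6 : (0:ℤ) ≤ ((n:ℤ) - dj + d) - st :=
              int_of_isnn (by push_cast; linear_combination hsum2 - hst) h5
            omega
      -- the exit
      obtain ⟨dJ, hdJ, hdJle⟩ := hinv (J-1) (by omega)
      set h := pi (x (J-1)) with hh
      have hhgar : 2*i₀ ≤ h := hJg
      have hh2k : h < 2*k := hplt2k _ (hxlt (J-1))
      obtain ⟨n, hn⟩ := hpsum (x (J-1)) (hxlt (J-1))
      rw [← hh] at hn
      have hbh : b h = (n:ℂ) - c - 1 - dJ := by linear_combination hn - hdJ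
      by_cases hhp : h = p
      · -- descent: pi (x (J-1)) = p is combinatorially impossible
        have hdesc : ∀ m u, 2*u + m = J → 1 ≤ u → x (J - u) = pi (x (u-1)) → False := by
          intro m
          induction m using Nat.strong_induction_on with
          | _ m IH =>
            intro u hJeq hu hyp
            have hJu1 : 1 ≤ J - u := by omega
            have e1 : x (J - u) = flip (pi (x (J - u - 1))) := by
              have := hxsucc (J - u - 1)
              rwa [show J - u - 1 + 1 = J - u by omega] at this
            set q1 := pi (x (J - u - 1)) with hq1
            have hq1lt : q1 < 2*k := hplt2k _ (hxlt _)
            have e3 : flip q1 = pi (x (u-1)) := by rw [← e1, hyp]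
            have e4 : q1 = x u := by
              have e5 : x u = flip (pi (x (u-1))) := by
                have := hxsucc (u-1)
                rwa [show u - 1 + 1 = u by omega] at this
              rw [e5, ← e3, hflip_invol _ hq1lt]
            rcases Nat.lt_or_ge m 2 with hm2 | hm2
            · interval_cases m
              · -- J = 2u : flip fixed point
                have e6 : J - u - 1 = u - 1 := by omega
                have e7 : flip q1 = q1 := by
                  rw [e3, hq1, e6]
                exact hflip_ne q1 hq1lt e7
              · -- J = 2u+1 : pi fixed point
                have e6 : J - u - 1 = u := by omega
                rw [e6] at hq1
                exact hpne (x u) (hxlt u) (by rw [← hq1, e4])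
            · -- step to u+1
              have e7 : x (J - (u+1)) = pi (x u) := by
                have e8 : x (J - u - 1) = pi (pi (x (J - u - 1))) :=
                  (hpinv _ (by have := hxlt (J - u - 1); omega)).symm
                rw [show J - (u+1) = J - u - 1 by omega, e8, ← hq1, e4]
              exact IH (m - 2) (by omega) (u+1) (by omega) (by omega)
                (by rwa [show u + 1 - 1 = u by omega])
        have hpix : pi (x (J-1)) = x 0 := by rw [← hh, hhp, hx0]
        rcases Nat.lt_or_ge J 2 with hJ2 | hJ2
        · have hJe : J = 1 := by omega
          rw [hJe] at hpix
          exact hpne (x 0) (by rw [hx0]; exact hp2k) hpix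
        · have hyp1 : x (J - 1) = pi (x 0) := by
            have e8 : x (J-1) = pi (pi (x (J-1))) :=
              (hpinv _ (by have := hxlt (J-1); omega)).symm
            rw [e8, hpix]
          exact hdesc (J - 2) 1 (by omega) le_rfl hyp1
      · -- pair (h, p) : both garbage, nonneg sum, contradiction with hE
        have hsum2 : b h + b p = (n:ℂ) - dJ + d := by
          linear_combination hbh + hd
        have hnn2 : IsNonnegInt (b h + b p) :=
          isnn_of_eq_int (z := (n:ℤ) - dJ + d) (by omega)
            (by push_cast; linear_combination hsum2)
        rcases Nat.lt_or_ge h p with hc1 | hc1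
        · exact hE h p (by omega) hc1 (by omega) hnn2
        · have hc2 : p < h := by omega
          exact hE p h (by omega) hc2 (by omega)
            (by rwa [add_comm] at hnn2)
  show SharpCond k (fun n => if n = 2*k then -1 - c else b n)
  set B : ℕ → ℂ := fun n => if n = 2*k then -1 - c else b n with hB
  have hBne : ∀ q, q ≠ 2*k → B q = b q := by
    intro q hq
    simp only [hB]
    rw [if_neg hq]
  have hBlast : B (2*k) = -1 - c := by
    simp [hB]
  intro i hik hex
  obtain ⟨p, q, hp, hpq, hq, hnn⟩ := hex
  have hp1 : B (2*i) = b (2*i) := hBne _ (by omega)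
  have hp2 : B (2*i+1) = b (2*i+1) := hBne _ (by omega)
  have hSi : S i := by
    rcases Nat.lt_or_ge q (2*k) with hq1 | hq1
    · rw [hBne p (by omega), hBne q (by omega)] at hnn
      exact ⟨p, q, hp, hpq, by omega, hnn⟩
    · have hq2 : q = 2*k := by omega
      subst hq2
      rw [hBne p (by omega), hBlast] at hnn
      obtain ⟨d, hd⟩ := hnn
      have hbp : b p = c + 1 + d := by linear_combination hd
      exact (lemA i hik p hp (by omega) d hbp).1
  obtain ⟨⟨si, hsi⟩, hmini⟩ := hsharp' i hik hSi
  constructor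
  · rw [hp1, hp2]
    exact ⟨si, hsi⟩
  · intro p' q' h1 h2 h3 hnn'
    rw [hp1, hp2]
    rcases Nat.lt_or_ge q' (2*k) with hq1 | hq1
    · rw [hBne p' (by omega), hBne q' (by omega)] at hnn' ⊢
      exact hmini p' q' h1 h2 (by omega) hnn'
    · have hq2 : q' = 2*k := by omega
      subst hq2
      rw [hBne p' (by omega), hBlast] at hnn' ⊢
      obtain ⟨d, hd⟩ := hnn'
      have hbp : b p' = c + 1 + d := by linear_combination hd
      have hle := (lemA i hik p' h1 (by omega) d hbp).2 si hsi
      exact isnn_of_eq_int (z := (d:ℤ) - si) (by omega)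
        (by push_cast; linear_combination hd - hsi)

/-- If a_{2k+1} is the ♯′-special element of (a₁,…,a_{2k+1}), then −1−a_{2k+1} is the
♯′-special element of (a₁,…,a_{2k},−1−a_{2k+1}). -/
theorem sharp_special_flip (k : ℕ) (a : ℕ → ℂ)
    (hpa : ∀ i < k, IsNonnegInt (a (2*i) + a (2*i+1)))
    (hs : IsSharpSpecial' k a (a (2*k))) :
    IsSharpSpecial' k (fun n => if n = 2*k then -1 - a (2*k) else a n)
      (-1 - a (2*k)) := by
  obtain ⟨bb, ⟨σ, hσ⟩, hsharp, hlast⟩ := hs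
  have hNk : 2*k < 2*k+1 := by omega
  set last : Fin (2*k+1) := ⟨2*k, hNk⟩ with hlastdef
  set σ' : Equiv.Perm (Fin (2*k+1)) := σ * Equiv.swap (σ.symm last) last with hσ'def
  have hσ'last : σ' last = last := by
    simp [hσ'def, Equiv.Perm.mul_apply, Equiv.swap_apply_right]
  have hσ'symm_last : σ'.symm last = last := by
    conv_lhs => rw [← hσ'last]
    rw [Equiv.symm_apply_apply]
  have hσ' : ∀ i : Fin (2*k+1), bb i = a (σ' i) := by
    intro i
    by_cases h1 : i = σ.symm last
    · subst h1
      have e1 : σ' (σ.symm last) = σ last := by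
        simp [hσ'def, Equiv.Perm.mul_apply, Equiv.swap_apply_left]
      rw [e1]
      have e2 : bb (σ.symm last) = a ((σ (σ.symm last) : Fin (2*k+1)) : ℕ) := hσ _
      rw [Equiv.apply_symm_apply] at e2
      have e3 : a ((σ last : Fin (2*k+1)) : ℕ) = bb ((last : Fin (2*k+1)) : ℕ) :=
        (hσ last).symm
      rw [e3, e2]
      exact hlast.symm
    · by_cases h2 : i = last
      · subst h2
        rw [hσ'last]
        exact hlast
      · have e1 : σ' i = σ i := by
          simp [hσ'def, Equiv.Perm.mul_apply, Equiv.swap_apply_of_ne_of_ne h1 h2]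
        rw [e1]
        exact hσ i
  -- coordinate versions
  set σn : ℕ → ℕ := fun p => if h : p < 2*k+1 then ((σ' ⟨p, h⟩ : Fin (2*k+1)) : ℕ) else p
    with hσn
  set σm : ℕ → ℕ :=
    fun p => if h : p < 2*k+1 then ((σ'.symm ⟨p, h⟩ : Fin (2*k+1)) : ℕ) else p with hσm
  set flipn : ℕ → ℕ := fun q => if q % 2 = 0 then q + 1 else q - 1 with hflipn
  have hσn_lt : ∀ p, p < 2*k+1 → σn p < 2*k+1 := by
    intro p hp
    simp only [hσn, dif_pos hp]
    exact (σ' ⟨p, hp⟩).isLt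
  have hσm_lt : ∀ p, p < 2*k+1 → σm p < 2*k+1 := by
    intro p hp
    simp only [hσm, dif_pos hp]
    exact (σ'.symm ⟨p, hp⟩).isLt
  have hσmn : ∀ p, p < 2*k+1 → σm (σn p) = p := by
    intro p hp
    have h2 : ((σ' ⟨p, hp⟩ : Fin (2*k+1)) : ℕ) < 2*k+1 := (σ' ⟨p, hp⟩).isLt
    simp only [hσn, hσm, dif_pos hp, dif_pos h2, Fin.eta, Equiv.symm_apply_apply]
  have hσnm : ∀ p, p < 2*k+1 → σn (σm p) = p := by
    intro p hp
    have h2 : ((σ'.symm ⟨p, hp⟩ : Fin (2*k+1)) : ℕ) < 2*k+1 := (σ'.symm ⟨p, hp⟩).isLt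
    simp only [hσn, hσm, dif_pos hp, dif_pos h2, Fin.eta, Equiv.apply_symm_apply]
  have hσn_last : σn (2*k) = 2*k := by
    simp only [hσn, dif_pos hNk]
    have : (⟨2*k, hNk⟩ : Fin (2*k+1)) = last := rfl
    rw [this, hσ'last]
  have hσm_last : σm (2*k) = 2*k := by
    simp only [hσm, dif_pos hNk]
    have : (⟨2*k, hNk⟩ : Fin (2*k+1)) = last := rfl
    rw [this, hσ'symm_last]
  have hσn_lt2k : ∀ p, p < 2*k → σn p < 2*k := by
    intro p hp
    have h1 : σn p < 2*k+1 := hσn_lt p (by omega)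
    rcases Nat.lt_or_ge (σn p) (2*k) with h | h
    · exact h
    · exfalso
      have h2 : σn p = 2*k := by omega
      have h3 := hσmn p (by omega)
      rw [h2, hσm_last] at h3
      omega
  have hσm_lt2k : ∀ p, p < 2*k → σm p < 2*k := by
    intro p hp
    have h1 : σm p < 2*k+1 := hσm_lt p (by omega)
    rcases Nat.lt_or_ge (σm p) (2*k) with h | h
    · exact h
    · exfalso
      have h2 : σm p = 2*k := by omega
      have h3 := hσnm p (by omega)
      rw [h2, hσn_last] at h3
      omega
  have hflipn_lt : ∀ q, q < 2*k → flipn q < 2*k := by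
    intro q hq
    simp only [hflipn]
    split <;> omega
  have hflipn_invol : ∀ q, q < 2*k → flipn (flipn q) = q := by
    intro q hq
    by_cases h : q % 2 = 0
    · have h2 : (q+1) % 2 = 1 := by omega
      simp only [hflipn, if_pos h, h2]
      norm_num
    · have h1 : q % 2 = 1 := by omega
      have h2 : (q-1) % 2 = 0 := by omega
      simp only [hflipn, if_neg h, if_pos h2]
      omega
  have hflipn_ne : ∀ q, q < 2*k → flipn q ≠ q := by
    intro q hq
    simp only [hflipn]
    split <;> omega
  -- the involution pi
  set piF : ℕ → ℕ := fun p => if p = 2*k then 2*k else σm (flipn (σn p)) with hpiF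
  have hpiF_last : piF (2*k) = 2*k := by simp [hpiF]
  have hpiF_eq : ∀ p, p < 2*k → piF p = σm (flipn (σn p)) := by
    intro p hp
    simp only [hpiF, if_neg (show p ≠ 2*k by omega)]
  have hpiF_lt2k : ∀ p, p < 2*k → piF p < 2*k := by
    intro p hp
    rw [hpiF_eq p hp]
    exact hσm_lt2k _ (hflipn_lt _ (hσn_lt2k _ hp))
  have hpiF_lt : ∀ p, p < 2*k+1 → piF p < 2*k+1 := by
    intro p hp
    rcases Nat.lt_or_ge p (2*k) with h | h
    · have := hpiF_lt2k p h; omega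
    · have h2 : p = 2*k := by omega
      rw [h2, hpiF_last]; omega
  have hpiF_inv : ∀ p, p < 2*k+1 → piF (piF p) = p := by
    intro p hp
    rcases Nat.lt_or_ge p (2*k) with h | h
    · rw [hpiF_eq p h, hpiF_eq _ (hσm_lt2k _ (hflipn_lt _ (hσn_lt2k _ h)))]
      rw [hσnm _ (by have := hflipn_lt _ (hσn_lt2k _ h); omega)]
      rw [hflipn_invol _ (hσn_lt2k _ h)]
      exact hσmn p (by omega)
    · have h2 : p = 2*k := by omega
      rw [h2, hpiF_last, hpiF_last]
  have hpiF_ne : ∀ p, p < 2*k → piF p ≠ p := by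
    intro p hp heq
    rw [hpiF_eq p hp] at heq
    have h1 : σn (σm (flipn (σn p))) = σn p := by rw [heq]
    rw [hσnm _ (by have := hflipn_lt _ (hσn_lt2k _ hp); omega)] at h1
    exact hflipn_ne (σn p) (hσn_lt2k _ hp) h1
  have hbb_σn : ∀ p (hp : p < 2*k+1), bb p = a (σn p) := by
    intro p hp
    have := hσ' ⟨p, hp⟩
    simpa only [hσn, dif_pos hp] using this
  have hpiF_sum : ∀ p, p < 2*k → IsNonnegInt (bb p + bb (piF p)) := by
    intro p hp
    set q := σn p with hq
    have hq2k : q < 2*k := hσn_lt2k _ hp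
    set r := flipn q with hr
    have hr2k : r < 2*k := hflipn_lt _ hq2k
    have hbbp : bb p = a q := hbb_σn p (by omega)
    have hbbpi : bb (piF p) = a r := by
      rw [hpiF_eq p hp, ← hr, hbb_σn (σm r) (by have := hσm_lt2k _ hr2k; omega)]
      rw [hσnm r (by omega)]
    rw [hbbp, hbbpi]
    set t := q / 2 with htd
    have htk : t < k := by omega
    by_cases hpar : q % 2 = 0
    · have e1 : q = 2*t := by omega
      have e2 : r = 2*t+1 := by
        simp only [hr, hflipn, if_pos hpar]; omega
      rw [e1, e2]
      exact hpa t htk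
    · have e1 : q = 2*t+1 := by omega
      have e2 : r = 2*t := by
        simp only [hr, hflipn, if_neg hpar]; omega
      rw [e1, e2, add_comm]
      exact hpa t htk
  have hcore := core k bb piF hpiF_inv hpiF_lt hpiF_last hpiF_ne hpiF_sum hsharp
  simp only [hlast] at hcore
  refine ⟨(fun n => if n = 2*k then -1 - a (2*k) else bb n), ⟨σ', ?_⟩, hcore, ?_⟩
  · intro i
    by_cases h1 : (i : ℕ) = 2*k
    · have h2 : i = last := Fin.ext h1
      rw [h2, hσ'last]
      simp [hlastdef]
    · have h2 : ((σ' i : Fin (2*k+1)) : ℕ) ≠ 2*k := by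
        intro hcon
        have h3 : σ' i = last := Fin.ext hcon
        have h4 : i = last := by
          apply σ'.injective
          rw [h3, hσ'last]
        exact h1 (by rw [h4])
      simp only [if_neg h1, if_neg h2]
      exact hσ' i
  · simp
end
end
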